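/- Let R be a commutative unital ring and let A ∈ M̂₃(R) ∩ dom(Φ²), i.e. A ∈ Ŝ. Then A ⋆ Φ(A) ⋆ Φ²(A) = 1 and A ⋆ Φ(A) ⋆ Φ⁻¹(A) = 1, where ⋆ denotes the Hadamard (entrywise) product of matrices and 1 is the 3×3 matrix all of whose entries equal 1. -/

import Mathlib

open Matrix

section KontsevichDefs

variable {R : Type*} [Ring R]

/-- `J₂`: the transposed Hadamard inverse, `J₂(M)_{jk} = (M_{kj})⁻¹`
(with `Ring.inverse`, which is the two-sided inverse on units and `0` elsewhere). -/
noncomputable def J2 {m : Type*} (M : Matrix m m R) : Matrix m m R :=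
  Matrix.of fun j k => Ring.inverse (M k j)

variable {m : Type*} [Fintype m] [DecidableEq m]

/-- `J = J₂ ∘ J₁`, where `J₁(M) = M⁻¹` is the usual matrix inverse. -/
noncomputable def Jmap (M : Matrix m m R) : Matrix m m R := J2 (Ring.inverse M)

/-- `J⁻¹ = J₁ ∘ J₂`. -/
noncomputable def JinvMap (M : Matrix m m R) : Matrix m m R := Ring.inverse (J2 M)

/-- `dom(J)`: `M` invertible and all entries of `M⁻¹` invertible. -/
def domJ (M : Matrix m m R) : Prop :=
  IsUnit M ∧ ∀ j k, IsUnit (Ring.inverse M j k)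

/-- `dom(J⁻¹)`: all entries of `M` invertible and `J₂(M)` invertible. -/
def domJinv (M : Matrix m m R) : Prop :=
  (∀ j k, IsUnit (M j k)) ∧ IsUnit (J2 M)

/-- `dom(Jⁿ)` defined recursively: `M ∈ dom(Jⁿ⁺¹)` iff `M ∈ dom(J)` and `J(M) ∈ dom(Jⁿ)`. -/
def domJpow : ℕ → Matrix m m R → Prop
  | 0, _ => True
  | n + 1, M => domJ M ∧ domJpow n (Jmap M)

/-- `A ∼ B`: `B = D₁⁻¹ A D₂` for diagonal matrices `D₁, D₂` with invertible diagonal entries. -/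
def simRel (A B : Matrix m m R) : Prop :=
  ∃ d₁ d₂ : m → Rˣ,
    B = Matrix.diagonal (fun i => (((d₁ i)⁻¹ : Rˣ) : R)) * A *
        Matrix.diagonal (fun i => ((d₂ i : Rˣ) : R))

/-- entrywise conjugation `x⁻¹ A x` by an invertible ring element. -/
def conjEntry {m' : Type*} (x : Rˣ) (A : Matrix m' m' R) : Matrix m' m' R :=
  Matrix.of fun j k => ((x⁻¹ : Rˣ) : R) * A j k * (x : R)

/-- `M̂ₙ(R)`: first row and first column consist entirely of `1`'s. -/
def Mhat {m' : Type*} [Zero m'] (A : Matrix m' m' R) : Prop :=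
  ∀ k, A 0 k = 1 ∧ A k 0 = 1

/-- `Λ^L(A)_{jk} = a₁₁ a_{j1}⁻¹ a_{jk} a_{1k}⁻¹`. -/
noncomputable def LamL {m' : Type*} [Zero m'] (A : Matrix m' m' R) : Matrix m' m' R :=
  Matrix.of fun j k => A 0 0 * Ring.inverse (A j 0) * A j k * Ring.inverse (A 0 k)

/-- `Λ^R(A)_{jk} = a_{j1}⁻¹ a_{jk} a_{1k}⁻¹ a₁₁`. -/
noncomputable def LamR {m' : Type*} [Zero m'] (A : Matrix m' m' R) : Matrix m' m' R :=
  Matrix.of fun j k => Ring.inverse (A j 0) * A j k * Ring.inverse (A 0 k) * A 0 0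

/-- `Φ(A) = J₂(Λ^L(A⁻¹))`. -/
noncomputable def Phi [Zero m] (A : Matrix m m R) : Matrix m m R := J2 (LamL (Ring.inverse A))

/-- `dom(Φ)`: `A ∈ M̂ₙ(R)`, all entries of `A` invertible, `A` invertible,
all entries of `A⁻¹` invertible. -/
def domPhi [Zero m] (A : Matrix m m R) : Prop :=
  Mhat A ∧ (∀ j k, IsUnit (A j k)) ∧ IsUnit A ∧ ∀ j k, IsUnit (Ring.inverse A j k)

/-- `Φ⁻¹(B) = Λ^R(J⁻¹(B)) = Λ^R((J₂ B)⁻¹)`. -/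
noncomputable def PhiInv [Zero m] (B : Matrix m m R) : Matrix m m R := LamR (Ring.inverse (J2 B))

/-- `dom(Φ⁻¹)`: `B ∈ M̂ₙ(R)`, all entries of `B` invertible, `J₂(B)` invertible,
all entries of `J₂(B)⁻¹` invertible. -/
def domPhiInv [Zero m] (B : Matrix m m R) : Prop :=
  Mhat B ∧ (∀ j k, IsUnit (B j k)) ∧ IsUnit (J2 B) ∧ ∀ j k, IsUnit (Ring.inverse (J2 B) j k)

/-- `dom(Φⁿ)` defined recursively. -/
def domPhipow [Zero m] : ℕ → Matrix m m R → Prop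
  | 0, _ => True
  | n + 1, A => domPhi A ∧ domPhipow n (Phi A)

/-- `Ψ = J₂ ∘ Φ ∘ J₂`. -/
noncomputable def Psi [Zero m] (A : Matrix m m R) : Matrix m m R := J2 (Phi (J2 A))

/-- `dom(Ψ)`: `A ∈ M̂ₙ(R)`, all entries of `A` invertible, `J₂(A) ∈ dom(Φ)`. -/
def domPsi [Zero m] (A : Matrix m m R) : Prop :=
  Mhat A ∧ (∀ j k, IsUnit (A j k)) ∧ domPhi (J2 A)

/-- every square submatrix (equinumerous injective choices of rows and columns) is invertible. -/
def allSquareSubInv (M : Matrix (Fin 3) (Fin 3) R) : Prop :=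
  ∀ (k : ℕ) (r c : Fin k → Fin 3), Function.Injective r → Function.Injective c →
    IsUnit (M.submatrix r c)

/-- only the `1×1` and `2×2` submatrices are required to be invertible. -/
def sub12Inv (M : Matrix (Fin 3) (Fin 3) R) : Prop :=
  (∀ j k, IsUnit (M j k)) ∧
  ∀ (r c : Fin 2 → Fin 3), Function.Injective r → Function.Injective c →
    IsUnit (M.submatrix r c)

/-- `S`: all square submatrices of `M` are invertible and `J₂(M)` is invertible. -/
def Sset (R : Type*) [Ring R] : Set (Matrix (Fin 3) (Fin 3) R) :=
  {M | allSquareSubInv M ∧ IsUnit (J2 M)}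

/-- `Ŝ = S ∩ M̂₃(R)`. -/
def Shat (R : Type*) [Ring R] : Set (Matrix (Fin 3) (Fin 3) R) :=
  {M | M ∈ Sset R ∧ Mhat M}

end KontsevichDefs

private lemma rinv_eq {R : Type*} [CommRing R] {x y : R} (h : x * y = 1) : Ring.inverse x = y := by
  obtain ⟨u, rfl⟩ := IsUnit.of_mul_eq_one _ h
  rw [Ring.inverse_unit]
  calc (↑u⁻¹ : R) = ↑u⁻¹ * (↑u * y) := by rw [h, mul_one]
  _ = y := by rw [← mul_assoc, Units.inv_mul, one_mul]

set_option maxHeartbeats 2000000 in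
theorem auxKont {R : Type*} [CommRing R]
    (a b c d p q r s u v w t m D E ia ib ic id' ip iq ir is' iu iv iw it' im' iD iE : R)
    (hpd : p = a - 1) (hqd : q = b - 1) (hrd : r = c - 1) (hsd : s = d - 1)
    (hud : u = b - a) (hvd : v = c - a) (hwd : w = d - b) (htd : t = d - c)
    (hmd : m = a*d - b*c) (hDd : D = a*d-b*c-a-d+b+c)
    (hEd : E = b*c-a*d+a*b*d+a*c*d-a*b*c-b*c*d)
    (hia : a * ia = 1) (hib : b * ib = 1) (hic : c * ic = 1) (hid : d * id' = 1)
    (hip : p * ip = 1) (hiq : q * iq = 1) (hir : r * ir = 1) (his : s * is' = 1)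
    (hiu : u * iu = 1) (hiv : v * iv = 1) (hiw : w * iw = 1) (hit : t * it' = 1)
    (him : m * im' = 1) (hiD : D * iD = 1) (hiE : E * iE = 1) :
    Matrix.hadamard (Matrix.hadamard (!![1,1,1;1,a,b;1,c,d] : Matrix (Fin 3) (Fin 3) R) (Phi !![1,1,1;1,a,b;1,c,d])) (Phi (Phi !![1,1,1;1,a,b;1,c,d])) =
      Matrix.of (fun _ _ => (1 : R)) ∧
    Matrix.hadamard (Matrix.hadamard (!![1,1,1;1,a,b;1,c,d] : Matrix (Fin 3) (Fin 3) R) (Phi !![1,1,1;1,a,b;1,c,d])) (PhiInv !![1,1,1;1,a,b;1,c,d]) =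
      Matrix.of (fun _ _ => (1 : R)) := by
  have hdetA : Ring.inverse (Matrix.det (!![1,1,1;1,a,b;1,c,d] : Matrix (Fin 3) (Fin 3) R)) = iD := by
    apply rinv_eq
    rw [Matrix.det_fin_three]
    show ((1) * (a) * (d) - (1) * (b) * (c) - (1) * (1) * (d) + (1) * (b) * (1) + (1) * (1) * (c) - (1) * (a) * (1)) * (iD) = 1
    linear_combination (1) * hiD + (-iD) * hDd
  have hBmat : Ring.inverse (!![1,1,1;1,a,b;1,c,d] : Matrix (Fin 3) (Fin 3) R) = !![m*iD, -(t*iD), u*iD; -(w*iD), s*iD, -(q*iD); v*iD, -(r*iD), p*iD] := by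
    rw [← Matrix.nonsing_inv_eq_ringInverse, Matrix.inv_def, Matrix.adjugate_fin_three, hdetA]
    ext i j
    fin_cases i <;> fin_cases j
    · show (iD) * ((a) * (d) - (b) * (c)) = m*iD
      linear_combination (-iD) * hmd
    · show (iD) * (-((1) * (d)) + (1) * (c)) = -(t*iD)
      linear_combination (iD) * htd
    · show (iD) * ((1) * (b) - (1) * (a)) = u*iD
      linear_combination (-iD) * hud
    · show (iD) * (-((1) * (d)) + (b) * (1)) = -(w*iD)
      linear_combination (iD) * hwd
    · show (iD) * ((1) * (d) - (1) * (1)) = s*iD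
      linear_combination (-iD) * hsd
    · show (iD) * (-((1) * (b)) + (1) * (1)) = -(q*iD)
      linear_combination (iD) * hqd
    · show (iD) * ((1) * (c) - (a) * (1)) = v*iD
      linear_combination (-iD) * hvd
    · show (iD) * (-((1) * (c)) + (1) * (1)) = -(r*iD)
      linear_combination (iD) * hrd
    · show (iD) * ((1) * (a) - (1) * (1)) = p*iD
      linear_combination (-iD) * hpd
  have p00 : Phi (!![1,1,1;1,a,b;1,c,d] : Matrix (Fin 3) (Fin 3) R) 0 0 = 1 := by
    show Ring.inverse (LamL (Ring.inverse (!![1,1,1;1,a,b;1,c,d] : Matrix (Fin 3) (Fin 3) R)) 0 0) = 1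
    rw [hBmat]
    show Ring.inverse ((m*iD) * Ring.inverse (m*iD) * (m*iD) * Ring.inverse (m*iD)) = 1
    rw [rinv_eq (show m*iD * (D*im') = 1 by linear_combination (iD*D) * him + (1) * hiD)]
    exact rinv_eq (by linear_combination (iD^2*im'*D^2*m + iD^2*D^2) * him + (iD*D + 1) * hiD)
  have p01 : Phi (!![1,1,1;1,a,b;1,c,d] : Matrix (Fin 3) (Fin 3) R) 0 1 = 1 := by
    show Ring.inverse (LamL (Ring.inverse (!![1,1,1;1,a,b;1,c,d] : Matrix (Fin 3) (Fin 3) R)) 1 0) = 1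
    rw [hBmat]
    show Ring.inverse ((m*iD) * Ring.inverse (-(w*iD)) * (-(w*iD)) * Ring.inverse (m*iD)) = 1
    rw [rinv_eq (show -(w*iD) * (-(D*iw)) = 1 by linear_combination (iD*D) * hiw + (1) * hiD), rinv_eq (show m*iD * (D*im') = 1 by linear_combination (iD*D) * him + (1) * hiD)]
    exact rinv_eq (by linear_combination (iD^2*im'*D^2*m) * hiw + (iD^2*D^2) * him + (iD*D + 1) * hiD)
  have p02 : Phi (!![1,1,1;1,a,b;1,c,d] : Matrix (Fin 3) (Fin 3) R) 0 2 = 1 := by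
    show Ring.inverse (LamL (Ring.inverse (!![1,1,1;1,a,b;1,c,d] : Matrix (Fin 3) (Fin 3) R)) 2 0) = 1
    rw [hBmat]
    show Ring.inverse ((m*iD) * Ring.inverse (v*iD) * (v*iD) * Ring.inverse (m*iD)) = 1
    rw [rinv_eq (show v*iD * (D*iv) = 1 by linear_combination (iD*D) * hiv + (1) * hiD), rinv_eq (show m*iD * (D*im') = 1 by linear_combination (iD*D) * him + (1) * hiD)]
    exact rinv_eq (by linear_combination (iD^2*im'*D^2*m) * hiv + (iD^2*D^2) * him + (iD*D + 1) * hiD)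
  have p10 : Phi (!![1,1,1;1,a,b;1,c,d] : Matrix (Fin 3) (Fin 3) R) 1 0 = 1 := by
    show Ring.inverse (LamL (Ring.inverse (!![1,1,1;1,a,b;1,c,d] : Matrix (Fin 3) (Fin 3) R)) 0 1) = 1
    rw [hBmat]
    show Ring.inverse ((m*iD) * Ring.inverse (m*iD) * (-(t*iD)) * Ring.inverse (-(t*iD))) = 1
    rw [rinv_eq (show m*iD * (D*im') = 1 by linear_combination (iD*D) * him + (1) * hiD), rinv_eq (show -(t*iD) * (-(D*it')) = 1 by linear_combination (iD*D) * hit + (1) * hiD)]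
    exact rinv_eq (by linear_combination (iD^2*im'*D^2*m) * hit + (iD^2*D^2) * him + (iD*D + 1) * hiD)
  have p11 : Phi (!![1,1,1;1,a,b;1,c,d] : Matrix (Fin 3) (Fin 3) R) 1 1 = w*t*(im'*is') := by
    show Ring.inverse (LamL (Ring.inverse (!![1,1,1;1,a,b;1,c,d] : Matrix (Fin 3) (Fin 3) R)) 1 1) = w*t*(im'*is')
    rw [hBmat]
    show Ring.inverse ((m*iD) * Ring.inverse (-(w*iD)) * (s*iD) * Ring.inverse (-(t*iD))) = w*t*(im'*is')
    rw [rinv_eq (show -(w*iD) * (-(D*iw)) = 1 by linear_combination (iD*D) * hiw + (1) * hiD), rinv_eq (show -(t*iD) * (-(D*it')) = 1 by linear_combination (iD*D) * hit + (1) * hiD)]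
    exact rinv_eq (by linear_combination (iD^2*im'*it'*iw*D^2*m*t*w) * his + (iD^2*im'*it'*D^2*m*t) * hiw + (iD^2*im'*D^2*m) * hit + (iD^2*D^2) * him + (iD*D + 1) * hiD)
  have p12 : Phi (!![1,1,1;1,a,b;1,c,d] : Matrix (Fin 3) (Fin 3) R) 1 2 = v*t*(im'*ir) := by
    show Ring.inverse (LamL (Ring.inverse (!![1,1,1;1,a,b;1,c,d] : Matrix (Fin 3) (Fin 3) R)) 2 1) = v*t*(im'*ir)
    rw [hBmat]
    show Ring.inverse ((m*iD) * Ring.inverse (v*iD) * (-(r*iD)) * Ring.inverse (-(t*iD))) = v*t*(im'*ir)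
    rw [rinv_eq (show v*iD * (D*iv) = 1 by linear_combination (iD*D) * hiv + (1) * hiD), rinv_eq (show -(t*iD) * (-(D*it')) = 1 by linear_combination (iD*D) * hit + (1) * hiD)]
    exact rinv_eq (by linear_combination (iD^2*im'*it'*iv*D^2*m*t*v) * hir + (iD^2*im'*it'*D^2*m*t) * hiv + (iD^2*im'*D^2*m) * hit + (iD^2*D^2) * him + (iD*D + 1) * hiD)
  have p20 : Phi (!![1,1,1;1,a,b;1,c,d] : Matrix (Fin 3) (Fin 3) R) 2 0 = 1 := by
    show Ring.inverse (LamL (Ring.inverse (!![1,1,1;1,a,b;1,c,d] : Matrix (Fin 3) (Fin 3) R)) 0 2) = 1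
    rw [hBmat]
    show Ring.inverse ((m*iD) * Ring.inverse (m*iD) * (u*iD) * Ring.inverse (u*iD)) = 1
    rw [rinv_eq (show m*iD * (D*im') = 1 by linear_combination (iD*D) * him + (1) * hiD), rinv_eq (show u*iD * (D*iu) = 1 by linear_combination (iD*D) * hiu + (1) * hiD)]
    exact rinv_eq (by linear_combination (iD^2*im'*D^2*m) * hiu + (iD^2*D^2) * him + (iD*D + 1) * hiD)
  have p21 : Phi (!![1,1,1;1,a,b;1,c,d] : Matrix (Fin 3) (Fin 3) R) 2 1 = w*u*(im'*iq) := by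
    show Ring.inverse (LamL (Ring.inverse (!![1,1,1;1,a,b;1,c,d] : Matrix (Fin 3) (Fin 3) R)) 1 2) = w*u*(im'*iq)
    rw [hBmat]
    show Ring.inverse ((m*iD) * Ring.inverse (-(w*iD)) * (-(q*iD)) * Ring.inverse (u*iD)) = w*u*(im'*iq)
    rw [rinv_eq (show -(w*iD) * (-(D*iw)) = 1 by linear_combination (iD*D) * hiw + (1) * hiD), rinv_eq (show u*iD * (D*iu) = 1 by linear_combination (iD*D) * hiu + (1) * hiD)]
    exact rinv_eq (by linear_combination (iD^2*im'*iw*iu*D^2*m*w*u) * hiq + (iD^2*im'*iw*D^2*m*w) * hiu + (iD^2*im'*D^2*m) * hiw + (iD^2*D^2) * him + (iD*D + 1) * hiD)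
  have p22 : Phi (!![1,1,1;1,a,b;1,c,d] : Matrix (Fin 3) (Fin 3) R) 2 2 = v*u*(im'*ip) := by
    show Ring.inverse (LamL (Ring.inverse (!![1,1,1;1,a,b;1,c,d] : Matrix (Fin 3) (Fin 3) R)) 2 2) = v*u*(im'*ip)
    rw [hBmat]
    show Ring.inverse ((m*iD) * Ring.inverse (v*iD) * (p*iD) * Ring.inverse (u*iD)) = v*u*(im'*ip)
    rw [rinv_eq (show v*iD * (D*iv) = 1 by linear_combination (iD*D) * hiv + (1) * hiD), rinv_eq (show u*iD * (D*iu) = 1 by linear_combination (iD*D) * hiu + (1) * hiD)]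
    exact rinv_eq (by linear_combination (iD^2*im'*iv*iu*D^2*m*v*u) * hip + (iD^2*im'*iv*D^2*m*v) * hiu + (iD^2*im'*D^2*m) * hiv + (iD^2*D^2) * him + (iD*D + 1) * hiD)
  have hPhiA : Phi (!![1,1,1;1,a,b;1,c,d] : Matrix (Fin 3) (Fin 3) R) = !![1, 1, 1; 1, w*t*(im'*is'), v*t*(im'*ir); 1, w*u*(im'*iq), v*u*(im'*ip)] := by
    ext i j
    fin_cases i <;> fin_cases j
    · exact p00
    · exact p01
    · exact p02
    · exact p10
    · exact p11
    · exact p12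
    · exact p20
    · exact p21
    · exact p22
  have hdetN : Ring.inverse (Matrix.det (!![1, 1, 1; 1, w*t*(im'*is'), v*t*(im'*ir); 1, w*u*(im'*iq), v*u*(im'*ip)] : Matrix (Fin 3) (Fin 3) R)) = -(m*m*(p*(q*(r*s)))*(iD*(iD*iE))) := by
    apply rinv_eq
    rw [Matrix.det_fin_three]
    show ((1) * (w*t*(im'*is')) * (v*u*(im'*ip)) - (1) * (v*t*(im'*ir)) * (w*u*(im'*iq)) - (1) * (1) * (v*u*(im'*ip)) + (1) * (v*t*(im'*ir)) * (1) + (1) * (1) * (w*u*(im'*iq)) - (1) * (w*t*(im'*is')) * (1)) * (-(m*m*(p*(q*(r*s)))*(iD*(iD*iE)))) = 1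
    linear_combination (-iE*iD^2*im'^2*is'*m^2*t*w*v*u*s*r*q + iE*iD^2*im'*m^2*v*u*s*r*q) * hip + (-iE*iD^2*im'^2*m^2*t*w*v*u*r*q + iE*iD^2*im'*m^2*t*w*r*q*p) * his + (iE*iD^2*im'^2*ir*m^2*t*w*v*u*s*r*p - iE*iD^2*im'*m^2*w*u*s*r*p) * hiq + (iE*iD^2*im'^2*m^2*t*w*v*u*s*p - iE*iD^2*im'*m^2*t*v*s*q*p) * hir + (iE*iD^2*im'*m*t*w*v*u*s*p - iE*iD^2*im'*m*t*w*v*u*r*q + iE*iD^2*m*t*w*r*q*p - iE*iD^2*m*t*v*s*q*p - iE*iD^2*m*w*u*s*r*p + iE*iD^2*m*v*u*s*r*q + iE*iD^2*t*w*v*u*s*p - iE*iD^2*t*w*v*u*r*q) * him + (iE*iD^2*m*t*w*r*q - iE*iD^2*m*t*v*s*q - iE*iD^2*m*w*u*s*r + iE*iD^2*t*w*v*u*s) * hpd + (iE*iD^2*m*t*w*r*a - iE*iD^2*m*t*w*r - iE*iD^2*m*t*v*s*a + iE*iD^2*m*t*v*s + iE*iD^2*m*v*u*s*r - iE*iD^2*t*w*v*u*r)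 * hqd + (iE*iD^2*m*t*w*a*b - iE*iD^2*m*t*w*a - iE*iD^2*m*t*w*b + iE*iD^2*m*t*w - iE*iD^2*m*w*u*s*a + iE*iD^2*m*w*u*s + iE*iD^2*m*v*u*s*b - iE*iD^2*m*v*u*s - iE*iD^2*t*w*v*u*b + iE*iD^2*t*w*v*u) * hrd + (iE*iD^2*m*t*a*b*c - iE*iD^2*m*t*a*b - iE*iD^2*m*t*a*c + iE*iD^2*m*t*a - iE*iD^2*m*t*b*c + iE*iD^2*m*t*b + iE*iD^2*m*t*c - iE*iD^2*m*t + iE*iD^2*m*a^2*c*d - iE*iD^2*m*a^2*c - iE*iD^2*m*a^2*d + iE*iD^2*m*a^2 - iE*iD^2*m*a*b*c*d + iE*iD^2*m*a*b*c + iE*iD^2*m*a*b*d - iE*iD^2*m*a*b - iE*iD^2*m*a*c*d + iE*iD^2*m*a*c + iE*iD^2*m*a*d - iE*iD^2*m*a + iE*iD^2*m*b*c*d - iE*iD^2*m*b*c - iE*iD^2*m*b*d + iE*iD^2*m*b + iE*iD^2*t*a^3*d - iE*iD^2*t*a^3 - iE*iD^2*t*a^2*b*c - iE*iD^2*t*a^2*b*d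 + 2*iE*iD^2*t*a^2*b - iE*iD^2*t*a^2*c*d + 2*iE*iD^2*t*a^2*c - iE*iD^2*t*a^2*d + iE*iD^2*t*a*b^2*c - iE*iD^2*t*a*b^2 + iE*iD^2*t*a*b*c^2 + iE*iD^2*t*a*b*c*d - 3*iE*iD^2*t*a*b*c + iE*iD^2*t*a*b*d - iE*iD^2*t*a*c^2 + iE*iD^2*t*a*c*d - iE*iD^2*t*b^2*c^2 + iE*iD^2*t*b^2*c + iE*iD^2*t*b*c^2 - iE*iD^2*t*b*c*d) * hwd + (-iE*iD^2*m*t*v*a*b + iE*iD^2*m*t*v*a + iE*iD^2*m*t*v*b - iE*iD^2*m*t*v - iE*iD^2*m*w*u*a*c + iE*iD^2*m*w*u*a + iE*iD^2*m*w*u*c - iE*iD^2*m*w*u + iE*iD^2*m*v*u*b*c - iE*iD^2*m*v*u*b - iE*iD^2*m*v*u*c + iE*iD^2*m*v*u + iE*iD^2*t*w*v*u*a - iE*iD^2*t*w*v*u) * hsd + (-iE*iD^2*m*t*a*b*d + iE*iD^2*m*t*a*b + iE*iD^2*m*t*a*d - iE*iD^2*m*t*a + iE*iD^2*m*t*b*d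 - iE*iD^2*m*t*b - iE*iD^2*m*t*d + iE*iD^2*m*t - iE*iD^2*m*a*b*c*d + iE*iD^2*m*a*b*c + iE*iD^2*m*a*b*d - iE*iD^2*m*a*b + iE*iD^2*m*a*c*d - iE*iD^2*m*a*c - iE*iD^2*m*a*d + iE*iD^2*m*a + iE*iD^2*m*b^2*c*d - iE*iD^2*m*b^2*c - iE*iD^2*m*b^2*d + iE*iD^2*m*b^2 - iE*iD^2*m*b*c*d + iE*iD^2*m*b*c + iE*iD^2*m*b*d - iE*iD^2*m*b - iE*iD^2*t*w*a^2*d + iE*iD^2*t*w*a^2 + iE*iD^2*t*w*a*b*c + iE*iD^2*t*w*a*b*d - 2*iE*iD^2*t*w*a*b - iE*iD^2*t*w*a*c + iE*iD^2*t*w*a*d - iE*iD^2*t*w*b^2*c + iE*iD^2*t*w*b^2 + iE*iD^2*t*w*b*c - iE*iD^2*t*w*b*d) * hvd + (iE*iD^2*m*a^2*b*d - iE*iD^2*m*a^2*b - iE*iD^2*m*a^2*d + iE*iD^2*m*a^2 - iE*iD^2*m*a*b^2*c + iE*iD^2*m*a*b^2 + 2*iE*iD^2*m*a*b*c - 2*iE*iD^2*m*a*b*d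 - iE*iD^2*m*a*c + 2*iE*iD^2*m*a*d - iE*iD^2*m*a + iE*iD^2*m*b^2*c - iE*iD^2*m*b^2 - 2*iE*iD^2*m*b*c + iE*iD^2*m*b*d + iE*iD^2*m*b + iE*iD^2*m*c - iE*iD^2*m*d - iE*iD^2*a^3*b*d + iE*iD^2*a^3*b + iE*iD^2*a^3*d^2 - iE*iD^2*a^3*d + iE*iD^2*a^2*b^2*c + iE*iD^2*a^2*b^2*d - 2*iE*iD^2*a^2*b^2 - 2*iE*iD^2*a^2*b*c - iE*iD^2*a^2*b*d^2 + 3*iE*iD^2*a^2*b*d - iE*iD^2*a^2*c*d^2 + 2*iE*iD^2*a^2*c*d - iE*iD^2*a^2*d^2 - iE*iD^2*a*b^3*c + iE*iD^2*a*b^3 - iE*iD^2*a*b^2*c^2 + 3*iE*iD^2*a*b^2*c - 2*iE*iD^2*a*b^2*d + iE*iD^2*a*b*c^2*d + iE*iD^2*a*b*c^2 + iE*iD^2*a*b*c*d^2 - 4*iE*iD^2*a*b*c*d + iE*iD^2*a*b*d^2 - iE*iD^2*a*c^2*d + iE*iD^2*a*c*d^2 + iE*iD^2*b^3*c^2 -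 iE*iD^2*b^3*c - iE*iD^2*b^2*c^2*d - iE*iD^2*b^2*c^2 + 2*iE*iD^2*b^2*c*d + iE*iD^2*b*c^2*d - iE*iD^2*b*c*d^2) * htd + (-iE*iD^2*m*w*a*c*d + iE*iD^2*m*w*a*c + iE*iD^2*m*w*a*d - iE*iD^2*m*w*a + iE*iD^2*m*w*c*d - iE*iD^2*m*w*c - iE*iD^2*m*w*d + iE*iD^2*m*w + iE*iD^2*m*v*b*c*d - iE*iD^2*m*v*b*c - iE*iD^2*m*v*b*d + iE*iD^2*m*v*b - iE*iD^2*m*v*c*d + iE*iD^2*m*v*c + iE*iD^2*m*v*d - iE*iD^2*m*v + iE*iD^2*t*w*v*a*d - iE*iD^2*t*w*v*a - iE*iD^2*t*w*v*b*c + iE*iD^2*t*w*v*b + iE*iD^2*t*w*v*c - iE*iD^2*t*w*v*d) * hud + (-iE*iD^2*a^2*b*c*d + iE*iD^2*a^2*b*c + iE*iD^2*a^2*b*d^2 - iE*iD^2*a^2*b*d + iE*iD^2*a^2*c*d^2 - iE*iD^2*a^2*c*d - 2*iE*iD^2*a^2*d^2 + 3*iE*iD^2*a^2*d - iE*iD^2*a^2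 + iE*iD^2*a*b^2*c^2 - iE*iD^2*a*b^2*c*d - iE*iD^2*a*b^2*c + iE*iD^2*a*b^2*d - iE*iD^2*a*b*c^2*d - iE*iD^2*a*b*c^2 - iE*iD^2*a*b*c*d^2 + 8*iE*iD^2*a*b*c*d - 3*iE*iD^2*a*b*c - iE*iD^2*a*b*d^2 - 3*iE*iD^2*a*b*d + 2*iE*iD^2*a*b + iE*iD^2*a*c^2*d - iE*iD^2*a*c*d^2 - 3*iE*iD^2*a*c*d + 2*iE*iD^2*a*c + 3*iE*iD^2*a*d^2 - 2*iE*iD^2*a*d + iE*iD^2*b^2*c^2*d - 2*iE*iD^2*b^2*c^2 - iE*iD^2*b^2*c*d + 3*iE*iD^2*b^2*c - iE*iD^2*b^2 - iE*iD^2*b*c^2*d + 3*iE*iD^2*b*c^2 + iE*iD^2*b*c*d^2 - 3*iE*iD^2*b*c*d - 2*iE*iD^2*b*c + 2*iE*iD^2*b*d - iE*iD^2*c^2 + 2*iE*iD^2*c*d - iE*iD^2*d^2) * hmd + (iD*D + 1) * hiD + (iD^2*D^2) * hiE + (-iE*iD^2*E*D - iE*iD^2*E*a*d + iE*iD^2*E*a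 + iE*iD^2*E*b*c - iE*iD^2*E*b - iE*iD^2*E*c + iE*iD^2*E*d) * hDd + (-iE*iD^2*a^2*d^2 + 2*iE*iD^2*a^2*d - iE*iD^2*a^2 + 2*iE*iD^2*a*b*c*d - 2*iE*iD^2*a*b*c - 2*iE*iD^2*a*b*d + 2*iE*iD^2*a*b - 2*iE*iD^2*a*c*d + 2*iE*iD^2*a*c + 2*iE*iD^2*a*d^2 - 2*iE*iD^2*a*d - iE*iD^2*b^2*c^2 + 2*iE*iD^2*b^2*c - iE*iD^2*b^2 + 2*iE*iD^2*b*c^2 - 2*iE*iD^2*b*c*d - 2*iE*iD^2*b*c + 2*iE*iD^2*b*d - iE*iD^2*c^2 + 2*iE*iD^2*c*d - iE*iD^2*d^2) * hEd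
  have hBp : Ring.inverse (!![1, 1, 1; 1, w*t*(im'*is'), v*t*(im'*ir); 1, w*u*(im'*iq), v*u*(im'*ip)] : Matrix (Fin 3) (Fin 3) R) = !![u*v*w*t*(iD*iE), -(u*m*r*s*(iD*iE)), t*m*p*q*(iD*iE); -(v*m*q*s*(iD*iE)), a*m*q*r*s*(iD*iE), -(c*m*p*q*s*(iD*iE)); w*m*p*r*(iD*iE), -(b*m*p*r*s*(iD*iE)), d*m*p*q*r*(iD*iE)] := by
    rw [← Matrix.nonsing_inv_eq_ringInverse, Matrix.inv_def, Matrix.adjugate_fin_three, hdetN]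
    ext i j
    fin_cases i <;> fin_cases j
    · show (-(m*m*(p*(q*(r*s)))*(iD*(iD*iE)))) * ((w*t*(im'*is')) * (v*u*(im'*ip)) - (v*t*(im'*ir)) * (w*u*(im'*iq))) = u*v*w*t*(iD*iE)
      linear_combination (-iE*iD^2*im'^2*is'*m^2*t*w*v*u*s*r*q) * hip + (-iE*iD^2*im'^2*m^2*t*w*v*u*r*q) * his + (iE*iD^2*im'^2*ir*m^2*t*w*v*u*s*r*p) * hiq + (iE*iD^2*im'^2*m^2*t*w*v*u*s*p) * hir + (iE*iD^2*im'*m*t*w*v*u*s*p - iE*iD^2*im'*m*t*w*v*u*r*q + iE*iD^2*t*w*v*u*s*p - iE*iD^2*t*w*v*u*r*q) * him + (iE*iD^2*t*w*v*u*s) * hpd + (iE*iD^2*t*w*v*u*a - iE*iD^2*t*w*v*u) * hsd + (-iE*iD^2*t*w*v*u*r) * hqd + (-iE*iD^2*t*w*v*u*b + iE*iD^2*t*w*v*u) * hrd + (-iE*iD^2*D*t*w*v + iE*iD^2*t*w*v*a*d - iE*iD^2*t*w*v*a - iE*iD^2*t*w*v*b*c + iE*iD^2*t*w*v*b + iE*iD^2*t*w*v*c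 - iE*iD^2*t*w*v*d) * hud + (iE*iD^2*D*t*w*a - iE*iD^2*D*t*w*b - iE*iD^2*t*w*a^2*d + iE*iD^2*t*w*a^2 + iE*iD^2*t*w*a*b*c + iE*iD^2*t*w*a*b*d - 2*iE*iD^2*t*w*a*b - iE*iD^2*t*w*a*c + iE*iD^2*t*w*a*d - iE*iD^2*t*w*b^2*c + iE*iD^2*t*w*b^2 + iE*iD^2*t*w*b*c - iE*iD^2*t*w*b*d) * hvd + (-iE*iD^2*D*t*a^2 + iE*iD^2*D*t*a*b + iE*iD^2*D*t*a*c - iE*iD^2*D*t*b*c + iE*iD^2*t*a^3*d - iE*iD^2*t*a^3 - iE*iD^2*t*a^2*b*c - iE*iD^2*t*a^2*b*d + 2*iE*iD^2*t*a^2*b - iE*iD^2*t*a^2*c*d + 2*iE*iD^2*t*a^2*c - iE*iD^2*t*a^2*d + iE*iD^2*t*a*b^2*c - iE*iD^2*t*a*b^2 + iE*iD^2*t*a*b*c^2 + iE*iD^2*t*a*b*c*d - 3*iE*iD^2*t*a*b*c + iE*iD^2*t*a*b*d - iE*iD^2*t*a*c^2 + iE*iD^2*t*a*c*d - iE*iD^2*t*b^2*c^2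 + iE*iD^2*t*b^2*c + iE*iD^2*t*b*c^2 - iE*iD^2*t*b*c*d) * hwd + (iE*iD^2*D*a^2*b - iE*iD^2*D*a^2*d - iE*iD^2*D*a*b^2 - iE*iD^2*D*a*b*c + iE*iD^2*D*a*b*d + iE*iD^2*D*a*c*d + iE*iD^2*D*b^2*c - iE*iD^2*D*b*c*d - iE*iD^2*a^3*b*d + iE*iD^2*a^3*b + iE*iD^2*a^3*d^2 - iE*iD^2*a^3*d + iE*iD^2*a^2*b^2*c + iE*iD^2*a^2*b^2*d - 2*iE*iD^2*a^2*b^2 - 2*iE*iD^2*a^2*b*c - iE*iD^2*a^2*b*d^2 + 3*iE*iD^2*a^2*b*d - iE*iD^2*a^2*c*d^2 + 2*iE*iD^2*a^2*c*d - iE*iD^2*a^2*d^2 - iE*iD^2*a*b^3*c + iE*iD^2*a*b^3 - iE*iD^2*a*b^2*c^2 + 3*iE*iD^2*a*b^2*c - 2*iE*iD^2*a*b^2*d + iE*iD^2*a*b*c^2*d + iE*iD^2*a*b*c^2 + iE*iD^2*a*b*c*d^2 - 4*iE*iD^2*a*b*c*d + iE*iD^2*a*b*d^2 - iE*iD^2*a*c^2*d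 + iE*iD^2*a*c*d^2 + iE*iD^2*b^3*c^2 - iE*iD^2*b^3*c - iE*iD^2*b^2*c^2*d - iE*iD^2*b^2*c^2 + 2*iE*iD^2*b^2*c*d + iE*iD^2*b*c^2*d - iE*iD^2*b*c*d^2) * htd + (iE*iD*t*w*v*u) * hiD + (-iE*iD^2*a^2*b*c + iE*iD^2*a^2*b*d + iE*iD^2*a^2*c*d - iE*iD^2*a^2*d^2 + iE*iD^2*a*b^2*c - iE*iD^2*a*b^2*d + iE*iD^2*a*b*c^2 - 2*iE*iD^2*a*b*c*d + iE*iD^2*a*b*d^2 - iE*iD^2*a*c^2*d + iE*iD^2*a*c*d^2 - iE*iD^2*b^2*c^2 + iE*iD^2*b^2*c*d + iE*iD^2*b*c^2*d - iE*iD^2*b*c*d^2) * hDd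
    · show (-(m*m*(p*(q*(r*s)))*(iD*(iD*iE)))) * (-((1) * (v*u*(im'*ip))) + (1) * (w*u*(im'*iq))) = -(u*m*r*s*(iD*iE))
      linear_combination (-iE*iD^2*im'*m^2*w*u*s*r*p) * hiq + (iE*iD^2*im'*m^2*v*u*s*r*q) * hip + (-iE*iD^2*m*w*u*s*r*p + iE*iD^2*m*v*u*s*r*q) * him + (-iE*iD^2*m*w*u*s*r) * hpd + (iE*iD^2*D*m*u*s - iE*iD^2*m*w*u*s*a + iE*iD^2*m*w*u*s + iE*iD^2*m*v*u*s*b - iE*iD^2*m*v*u*s) * hrd + (iE*iD^2*D*m*u*c - iE*iD^2*D*m*u - iE*iD^2*m*w*u*a*c + iE*iD^2*m*w*u*a + iE*iD^2*m*w*u*c - iE*iD^2*m*w*u + iE*iD^2*m*v*u*b*c - iE*iD^2*m*v*u*b - iE*iD^2*m*v*u*c + iE*iD^2*m*v*u) * hsd + (iE*iD^2*D*m*c*d - iE*iD^2*D*m*c - iE*iD^2*D*m*d + iE*iD^2*D*m - iE*iD^2*m*w*a*c*d + iE*iD^2*m*w*a*c + iE*iD^2*m*w*a*d - iE*iD^2*m*w*a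 + iE*iD^2*m*w*c*d - iE*iD^2*m*w*c - iE*iD^2*m*w*d + iE*iD^2*m*w + iE*iD^2*m*v*b*c*d - iE*iD^2*m*v*b*c - iE*iD^2*m*v*b*d + iE*iD^2*m*v*b - iE*iD^2*m*v*c*d + iE*iD^2*m*v*c + iE*iD^2*m*v*d - iE*iD^2*m*v) * hud + (iE*iD^2*m*a^2*c*d - iE*iD^2*m*a^2*c - iE*iD^2*m*a^2*d + iE*iD^2*m*a^2 - iE*iD^2*m*a*b*c*d + iE*iD^2*m*a*b*c + iE*iD^2*m*a*b*d - iE*iD^2*m*a*b - iE*iD^2*m*a*c*d + iE*iD^2*m*a*c + iE*iD^2*m*a*d - iE*iD^2*m*a + iE*iD^2*m*b*c*d - iE*iD^2*m*b*c - iE*iD^2*m*b*d + iE*iD^2*m*b) * hwd + (iE*iD^2*m*v*u*s*r) * hqd + (-iE*iD^2*m*a*b*c*d + iE*iD^2*m*a*b*c + iE*iD^2*m*a*b*d - iE*iD^2*m*a*b + iE*iD^2*m*a*c*d - iE*iD^2*m*a*c - iE*iD^2*m*a*d + iE*iD^2*m*a + iE*iD^2*m*b^2*c*d - iE*iD^2*m*b^2*c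 - iE*iD^2*m*b^2*d + iE*iD^2*m*b^2 - iE*iD^2*m*b*c*d + iE*iD^2*m*b*c + iE*iD^2*m*b*d - iE*iD^2*m*b) * hvd + (-iE*iD^2*D*a*c*d + iE*iD^2*D*a*c + iE*iD^2*D*a*d - iE*iD^2*D*a + iE*iD^2*D*b*c*d - iE*iD^2*D*b*c - iE*iD^2*D*b*d + iE*iD^2*D*b + iE*iD^2*a^2*c*d^2 - 2*iE*iD^2*a^2*c*d + iE*iD^2*a^2*c - iE*iD^2*a^2*d^2 + 2*iE*iD^2*a^2*d - iE*iD^2*a^2 - iE*iD^2*a*b*c^2*d + iE*iD^2*a*b*c^2 - iE*iD^2*a*b*c*d^2 + 4*iE*iD^2*a*b*c*d - 3*iE*iD^2*a*b*c + iE*iD^2*a*b*d^2 - 3*iE*iD^2*a*b*d + 2*iE*iD^2*a*b + iE*iD^2*a*c^2*d - iE*iD^2*a*c^2 - iE*iD^2*a*c*d^2 + iE*iD^2*a*c + iE*iD^2*a*d^2 - iE*iD^2*a*d + iE*iD^2*b^2*c^2*d - iE*iD^2*b^2*c^2 - 2*iE*iD^2*b^2*c*d + 2*iE*iD^2*b^2*c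 + iE*iD^2*b^2*d - iE*iD^2*b^2 - iE*iD^2*b*c^2*d + iE*iD^2*b*c^2 + iE*iD^2*b*c*d^2 - iE*iD^2*b*c - iE*iD^2*b*d^2 + iE*iD^2*b*d) * hmd + (-iE*iD*m*u*s*r) * hiD + (-iE*iD^2*a^2*c*d^2 + iE*iD^2*a^2*c*d + iE*iD^2*a^2*d^2 - iE*iD^2*a^2*d + iE*iD^2*a*b*c^2*d - iE*iD^2*a*b*c^2 + iE*iD^2*a*b*c*d^2 - 2*iE*iD^2*a*b*c*d + iE*iD^2*a*b*c - iE*iD^2*a*b*d^2 + iE*iD^2*a*b*d - iE*iD^2*b^2*c^2*d + iE*iD^2*b^2*c^2 + iE*iD^2*b^2*c*d - iE*iD^2*b^2*c) * hDd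
    · show (-(m*m*(p*(q*(r*s)))*(iD*(iD*iE)))) * ((1) * (v*t*(im'*ir)) - (1) * (w*t*(im'*is'))) = t*m*p*q*(iD*iE)
      linear_combination (iE*iD^2*im'*m^2*t*w*r*q*p) * his + (-iE*iD^2*im'*m^2*t*v*s*q*p) * hir + (iE*iD^2*m*t*w*r*q*p - iE*iD^2*m*t*v*s*q*p) * him + (-iE*iD^2*D*m*t*q + iE*iD^2*m*t*w*r*q - iE*iD^2*m*t*v*s*q) * hpd + (-iE*iD^2*D*m*t*a + iE*iD^2*D*m*t + iE*iD^2*m*t*w*r*a - iE*iD^2*m*t*w*r - iE*iD^2*m*t*v*s*a + iE*iD^2*m*t*v*s) * hqd + (iE*iD^2*m*t*w*a*b - iE*iD^2*m*t*w*a - iE*iD^2*m*t*w*b + iE*iD^2*m*t*w) * hrd + (iE*iD^2*m*t*a*b*c - iE*iD^2*m*t*a*b - iE*iD^2*m*t*a*c + iE*iD^2*m*t*a - iE*iD^2*m*t*b*c + iE*iD^2*m*t*b + iE*iD^2*m*t*c - iE*iD^2*m*t) * hwd + (-iE*iD^2*m*t*v*a*b + iE*iD^2*m*t*v*a + iE*iD^2*m*t*v*b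 - iE*iD^2*m*t*v) * hsd + (-iE*iD^2*m*t*a*b*d + iE*iD^2*m*t*a*b + iE*iD^2*m*t*a*d - iE*iD^2*m*t*a + iE*iD^2*m*t*b*d - iE*iD^2*m*t*b - iE*iD^2*m*t*d + iE*iD^2*m*t) * hvd + (-iE*iD^2*D*m*a*b + iE*iD^2*D*m*a + iE*iD^2*D*m*b - iE*iD^2*D*m + iE*iD^2*m*a^2*b*d - iE*iD^2*m*a^2*b - iE*iD^2*m*a^2*d + iE*iD^2*m*a^2 - iE*iD^2*m*a*b^2*c + iE*iD^2*m*a*b^2 + 2*iE*iD^2*m*a*b*c - 2*iE*iD^2*m*a*b*d - iE*iD^2*m*a*c + 2*iE*iD^2*m*a*d - iE*iD^2*m*a + iE*iD^2*m*b^2*c - iE*iD^2*m*b^2 - 2*iE*iD^2*m*b*c + iE*iD^2*m*b*d + iE*iD^2*m*b + iE*iD^2*m*c - iE*iD^2*m*d) * htd + (iE*iD^2*D*a*b*c - iE*iD^2*D*a*b*d - iE*iD^2*D*a*c + iE*iD^2*D*a*d - iE*iD^2*D*b*c + iE*iD^2*D*b*d + iE*iD^2*D*c - iE*iD^2*D*d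 - iE*iD^2*a^2*b*c*d + iE*iD^2*a^2*b*c + iE*iD^2*a^2*b*d^2 - iE*iD^2*a^2*b*d + iE*iD^2*a^2*c*d - iE*iD^2*a^2*c - iE*iD^2*a^2*d^2 + iE*iD^2*a^2*d + iE*iD^2*a*b^2*c^2 - iE*iD^2*a*b^2*c*d - iE*iD^2*a*b^2*c + iE*iD^2*a*b^2*d - 2*iE*iD^2*a*b*c^2 + 4*iE*iD^2*a*b*c*d - 2*iE*iD^2*a*b*d^2 + iE*iD^2*a*c^2 - 3*iE*iD^2*a*c*d + iE*iD^2*a*c + 2*iE*iD^2*a*d^2 - iE*iD^2*a*d - iE*iD^2*b^2*c^2 + iE*iD^2*b^2*c*d + iE*iD^2*b^2*c - iE*iD^2*b^2*d + 2*iE*iD^2*b*c^2 - 3*iE*iD^2*b*c*d - iE*iD^2*b*c + iE*iD^2*b*d^2 + iE*iD^2*b*d - iE*iD^2*c^2 + 2*iE*iD^2*c*d - iE*iD^2*d^2) * hmd + (iE*iD*m*t*q*p) * hiD + (iE*iD^2*a^2*b*c*d - iE*iD^2*a^2*b*d^2 - iE*iD^2*a^2*c*d + iE*iD^2*a^2*d^2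 - iE*iD^2*a*b^2*c^2 + iE*iD^2*a*b^2*c*d + iE*iD^2*a*b*c^2 - 2*iE*iD^2*a*b*c*d + iE*iD^2*a*b*d^2 + iE*iD^2*a*c*d - iE*iD^2*a*d^2 + iE*iD^2*b^2*c^2 - iE*iD^2*b^2*c*d - iE*iD^2*b*c^2 + iE*iD^2*b*c*d) * hDd
    · show (-(m*m*(p*(q*(r*s)))*(iD*(iD*iE)))) * (-((1) * (v*u*(im'*ip))) + (v*t*(im'*ir)) * (1)) = -(v*m*q*s*(iD*iE))
      linear_combination (-iE*iD^2*im'*m^2*t*v*s*q*p) * hir + (iE*iD^2*im'*m^2*v*u*s*r*q) * hip + (-iE*iD^2*m*t*v*s*q*p + iE*iD^2*m*v*u*s*r*q) * him + (-iE*iD^2*m*t*v*s*q) * hpd + (iE*iD^2*D*m*v*s - iE*iD^2*m*t*v*s*a + iE*iD^2*m*t*v*s + iE*iD^2*m*v*u*s*r) * hqd + (iE*iD^2*D*m*v*b - iE*iD^2*D*m*v - iE*iD^2*m*t*v*a*b + iE*iD^2*m*t*v*a + iE*iD^2*m*t*v*b - iE*iD^2*m*t*v + iE*iD^2*m*v*u*b*c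 - iE*iD^2*m*v*u*b - iE*iD^2*m*v*u*c + iE*iD^2*m*v*u) * hsd + (iE*iD^2*D*m*b*d - iE*iD^2*D*m*b - iE*iD^2*D*m*d + iE*iD^2*D*m - iE*iD^2*m*t*a*b*d + iE*iD^2*m*t*a*b + iE*iD^2*m*t*a*d - iE*iD^2*m*t*a + iE*iD^2*m*t*b*d - iE*iD^2*m*t*b - iE*iD^2*m*t*d + iE*iD^2*m*t - iE*iD^2*m*a*b*c*d + iE*iD^2*m*a*b*c + iE*iD^2*m*a*b*d - iE*iD^2*m*a*b + iE*iD^2*m*a*c*d - iE*iD^2*m*a*c - iE*iD^2*m*a*d + iE*iD^2*m*a + iE*iD^2*m*b^2*c*d - iE*iD^2*m*b^2*c - iE*iD^2*m*b^2*d + iE*iD^2*m*b^2 - iE*iD^2*m*b*c*d + iE*iD^2*m*b*c + iE*iD^2*m*b*d - iE*iD^2*m*b) * hvd + (iE*iD^2*m*a^2*b*d - iE*iD^2*m*a^2*b - iE*iD^2*m*a^2*d + iE*iD^2*m*a^2 - iE*iD^2*m*a*b*c*d + iE*iD^2*m*a*b*c - iE*iD^2*m*a*b*d + iE*iD^2*m*a*b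 + iE*iD^2*m*a*c*d - iE*iD^2*m*a*c + iE*iD^2*m*a*d - iE*iD^2*m*a + iE*iD^2*m*b*c*d - iE*iD^2*m*b*c - iE*iD^2*m*c*d + iE*iD^2*m*c) * htd + (iE*iD^2*m*v*u*s*b - iE*iD^2*m*v*u*s) * hrd + (iE*iD^2*m*v*b*c*d - iE*iD^2*m*v*b*c - iE*iD^2*m*v*b*d + iE*iD^2*m*v*b - iE*iD^2*m*v*c*d + iE*iD^2*m*v*c + iE*iD^2*m*v*d - iE*iD^2*m*v) * hud + (-iE*iD^2*D*a*b*d + iE*iD^2*D*a*b + iE*iD^2*D*a*d - iE*iD^2*D*a + iE*iD^2*D*b*c*d - iE*iD^2*D*b*c - iE*iD^2*D*c*d + iE*iD^2*D*c + iE*iD^2*a^2*b*d^2 - 2*iE*iD^2*a^2*b*d + iE*iD^2*a^2*b - iE*iD^2*a^2*d^2 + 2*iE*iD^2*a^2*d - iE*iD^2*a^2 - iE*iD^2*a*b^2*c*d + iE*iD^2*a*b^2*c + iE*iD^2*a*b^2*d - iE*iD^2*a*b^2 - iE*iD^2*a*b*c*d^2 + 4*iE*iD^2*a*b*c*d - 3*iE*iD^2*a*b*c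 - iE*iD^2*a*b*d^2 + iE*iD^2*a*b + iE*iD^2*a*c*d^2 - 3*iE*iD^2*a*c*d + 2*iE*iD^2*a*c + iE*iD^2*a*d^2 - iE*iD^2*a*d + iE*iD^2*b^2*c^2*d - iE*iD^2*b^2*c^2 - iE*iD^2*b^2*c*d + iE*iD^2*b^2*c - 2*iE*iD^2*b*c^2*d + 2*iE*iD^2*b*c^2 + iE*iD^2*b*c*d^2 - iE*iD^2*b*c + iE*iD^2*c^2*d - iE*iD^2*c^2 - iE*iD^2*c*d^2 + iE*iD^2*c*d) * hmd + (-iE*iD*m*v*s*q) * hiD + (-iE*iD^2*a^2*b*d^2 + iE*iD^2*a^2*b*d + iE*iD^2*a^2*d^2 - iE*iD^2*a^2*d + iE*iD^2*a*b^2*c*d - iE*iD^2*a*b^2*c + iE*iD^2*a*b*c*d^2 - 2*iE*iD^2*a*b*c*d + iE*iD^2*a*b*c - iE*iD^2*a*c*d^2 + iE*iD^2*a*c*d - iE*iD^2*b^2*c^2*d + iE*iD^2*b^2*c^2 + iE*iD^2*b*c^2*d - iE*iD^2*b*c^2) * hDd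
    · show (-(m*m*(p*(q*(r*s)))*(iD*(iD*iE)))) * ((1) * (v*u*(im'*ip)) - (1) * (1)) = a*m*q*r*s*(iD*iE)
      linear_combination (-iE*iD^2*im'*m^2*v*u*s*r*q) * hip + (-iE*iD^2*m*v*u*s*r*q) * him + (iE*iD^2*m^2*s*r*q) * hpd + (-iE*iD^2*D*m*s*r*a + iE*iD^2*m^2*s*r*a - iE*iD^2*m^2*s*r - iE*iD^2*m*v*u*s*r) * hqd + (-iE*iD^2*D*m*s*a*b + iE*iD^2*D*m*s*a + iE*iD^2*m^2*s*a*b - iE*iD^2*m^2*s*a - iE*iD^2*m^2*s*b + iE*iD^2*m^2*s - iE*iD^2*m*v*u*s*b + iE*iD^2*m*v*u*s) * hrd + (-iE*iD^2*D*m*a*b*c + iE*iD^2*D*m*a*b + iE*iD^2*D*m*a*c - iE*iD^2*D*m*a + iE*iD^2*m^2*a*b*c - iE*iD^2*m^2*a*b - iE*iD^2*m^2*a*c + iE*iD^2*m^2*a - iE*iD^2*m^2*b*c + iE*iD^2*m^2*b + iE*iD^2*m^2*c - iE*iD^2*m^2 - iE*iD^2*m*v*u*b*c + iE*iD^2*m*v*u*b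 + iE*iD^2*m*v*u*c - iE*iD^2*m*v*u) * hsd + (-iE*iD^2*D*a*b*c*d + iE*iD^2*D*a*b*c + iE*iD^2*D*a*b*d - iE*iD^2*D*a*b + iE*iD^2*D*a*c*d - iE*iD^2*D*a*c - iE*iD^2*D*a*d + iE*iD^2*D*a + iE*iD^2*m*a*b*c*d - iE*iD^2*m*a*b*c - iE*iD^2*m*a*b*d + iE*iD^2*m*a*b - iE*iD^2*m*a*c*d + iE*iD^2*m*a*c + iE*iD^2*m*a*d - iE*iD^2*m*a - iE*iD^2*m*b*c*d + iE*iD^2*m*b*c + iE*iD^2*m*b*d - iE*iD^2*m*b + iE*iD^2*m*c*d - iE*iD^2*m*c - iE*iD^2*m*d + iE*iD^2*m + iE*iD^2*a^2*b*c*d^2 - 2*iE*iD^2*a^2*b*c*d + iE*iD^2*a^2*b*c - iE*iD^2*a^2*b*d^2 + 2*iE*iD^2*a^2*b*d - iE*iD^2*a^2*b - iE*iD^2*a^2*c*d^2 + 2*iE*iD^2*a^2*c*d - iE*iD^2*a^2*c + iE*iD^2*a^2*d^2 - 2*iE*iD^2*a^2*d + iE*iD^2*a^2 - iE*iD^2*a*b^2*c^2*d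 + iE*iD^2*a*b^2*c^2 + 2*iE*iD^2*a*b^2*c*d - 2*iE*iD^2*a*b^2*c - iE*iD^2*a*b^2*d + iE*iD^2*a*b^2 + 2*iE*iD^2*a*b*c^2*d - 2*iE*iD^2*a*b*c^2 - iE*iD^2*a*b*c*d^2 - 2*iE*iD^2*a*b*c*d + 3*iE*iD^2*a*b*c + iE*iD^2*a*b*d^2 - iE*iD^2*a*b - iE*iD^2*a*c^2*d + iE*iD^2*a*c^2 + iE*iD^2*a*c*d^2 - iE*iD^2*a*c - iE*iD^2*a*d^2 + iE*iD^2*a*d) * hmd + (-iE*iD^2*m*v*b*c*d + iE*iD^2*m*v*b*c + iE*iD^2*m*v*b*d - iE*iD^2*m*v*b + iE*iD^2*m*v*c*d - iE*iD^2*m*v*c - iE*iD^2*m*v*d + iE*iD^2*m*v) * hud + (iE*iD^2*m*a*b*c*d - iE*iD^2*m*a*b*c - iE*iD^2*m*a*b*d + iE*iD^2*m*a*b - iE*iD^2*m*a*c*d + iE*iD^2*m*a*c + iE*iD^2*m*a*d - iE*iD^2*m*a - iE*iD^2*m*b^2*c*d + iE*iD^2*m*b^2*c + iE*iD^2*m*b^2*d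 - iE*iD^2*m*b^2 + iE*iD^2*m*b*c*d - iE*iD^2*m*b*c - iE*iD^2*m*b*d + iE*iD^2*m*b) * hvd + (iE*iD*m*s*r*q*a) * hiD + (-iE*iD^2*a^2*b*c*d^2 + iE*iD^2*a^2*b*c*d + iE*iD^2*a^2*b*d^2 - iE*iD^2*a^2*b*d + iE*iD^2*a^2*c*d^2 - iE*iD^2*a^2*c*d - iE*iD^2*a^2*d^2 + iE*iD^2*a^2*d + iE*iD^2*a*b^2*c^2*d - iE*iD^2*a*b^2*c^2 - iE*iD^2*a*b^2*c*d + iE*iD^2*a*b^2*c - iE*iD^2*a*b*c^2*d + iE*iD^2*a*b*c^2 + iE*iD^2*a*b*c*d - iE*iD^2*a*b*c) * hDd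
    · show (-(m*m*(p*(q*(r*s)))*(iD*(iD*iE)))) * (-((1) * (v*t*(im'*ir))) + (1) * (1)) = -(c*m*p*q*s*(iD*iE))
      linear_combination (iE*iD^2*im'*m^2*t*v*s*q*p) * hir + (iE*iD^2*m*t*v*s*q*p) * him + (iE*iD^2*D*m*s*q*c - iE*iD^2*m^2*s*r*q + iE*iD^2*m*t*v*s*q) * hpd + (iE*iD^2*D*m*s*a*c - iE*iD^2*D*m*s*c - iE*iD^2*m^2*s*r*a + iE*iD^2*m^2*s*r + iE*iD^2*m*t*v*s*a - iE*iD^2*m*t*v*s) * hqd + (-iE*iD^2*m^2*s*a*b + iE*iD^2*m^2*s*a + iE*iD^2*m^2*s*b - iE*iD^2*m^2*s) * hrd + (iE*iD^2*D*m*a*b*c - iE*iD^2*D*m*a*c - iE*iD^2*D*m*b*c + iE*iD^2*D*m*c - iE*iD^2*m^2*a*b*c + iE*iD^2*m^2*a*b + iE*iD^2*m^2*a*c - iE*iD^2*m^2*a + iE*iD^2*m^2*b*c - iE*iD^2*m^2*b - iE*iD^2*m^2*c + iE*iD^2*m^2 + iE*iD^2*m*t*v*a*b - iE*iD^2*m*t*v*a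 - iE*iD^2*m*t*v*b + iE*iD^2*m*t*v) * hsd + (iE*iD^2*D*a*b*c*d - iE*iD^2*D*a*b*c - iE*iD^2*D*a*c*d + iE*iD^2*D*a*c - iE*iD^2*D*b*c*d + iE*iD^2*D*b*c + iE*iD^2*D*c*d - iE*iD^2*D*c - iE*iD^2*m*a*b*c*d + iE*iD^2*m*a*b*c + iE*iD^2*m*a*b*d - iE*iD^2*m*a*b + iE*iD^2*m*a*c*d - iE*iD^2*m*a*c - iE*iD^2*m*a*d + iE*iD^2*m*a + iE*iD^2*m*b*c*d - iE*iD^2*m*b*c - iE*iD^2*m*b*d + iE*iD^2*m*b - iE*iD^2*m*c*d + iE*iD^2*m*c + iE*iD^2*m*d - iE*iD^2*m - iE*iD^2*a^2*b*c*d^2 + 2*iE*iD^2*a^2*b*c*d - iE*iD^2*a^2*b*c + iE*iD^2*a^2*c*d^2 - 2*iE*iD^2*a^2*c*d + iE*iD^2*a^2*c + iE*iD^2*a*b^2*c^2*d - iE*iD^2*a*b^2*c^2 - iE*iD^2*a*b^2*c*d + iE*iD^2*a*b^2*c - 2*iE*iD^2*a*b*c^2*d + 2*iE*iD^2*a*b*c^2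 + 2*iE*iD^2*a*b*c*d^2 - 2*iE*iD^2*a*b*c*d + iE*iD^2*a*c^2*d - iE*iD^2*a*c^2 - 2*iE*iD^2*a*c*d^2 + 3*iE*iD^2*a*c*d - iE*iD^2*a*c - iE*iD^2*b^2*c^2*d + iE*iD^2*b^2*c^2 + iE*iD^2*b^2*c*d - iE*iD^2*b^2*c + 2*iE*iD^2*b*c^2*d - 2*iE*iD^2*b*c^2 - iE*iD^2*b*c*d^2 + iE*iD^2*b*c - iE*iD^2*c^2*d + iE*iD^2*c^2 + iE*iD^2*c*d^2 - iE*iD^2*c*d) * hmd + (iE*iD^2*m*t*a*b*d - iE*iD^2*m*t*a*b - iE*iD^2*m*t*a*d + iE*iD^2*m*t*a - iE*iD^2*m*t*b*d + iE*iD^2*m*t*b + iE*iD^2*m*t*d - iE*iD^2*m*t) * hvd + (-iE*iD^2*m*a^2*b*d + iE*iD^2*m*a^2*b + iE*iD^2*m*a^2*d - iE*iD^2*m*a^2 + iE*iD^2*m*a*b*c*d - iE*iD^2*m*a*b*c + iE*iD^2*m*a*b*d - iE*iD^2*m*a*b - iE*iD^2*m*a*c*d + iE*iD^2*m*a*c -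 iE*iD^2*m*a*d + iE*iD^2*m*a - iE*iD^2*m*b*c*d + iE*iD^2*m*b*c + iE*iD^2*m*c*d - iE*iD^2*m*c) * htd + (-iE*iD*m*s*q*p*c) * hiD + (iE*iD^2*a^2*b*c*d^2 - iE*iD^2*a^2*b*c*d - iE*iD^2*a^2*c*d^2 + iE*iD^2*a^2*c*d - iE*iD^2*a*b^2*c^2*d + iE*iD^2*a*b^2*c^2 + iE*iD^2*a*b*c^2*d - iE*iD^2*a*b*c^2 - iE*iD^2*a*b*c*d^2 + iE*iD^2*a*b*c*d + iE*iD^2*a*c*d^2 - iE*iD^2*a*c*d + iE*iD^2*b^2*c^2*d - iE*iD^2*b^2*c^2 - iE*iD^2*b*c^2*d + iE*iD^2*b*c^2) * hDd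
    · show (-(m*m*(p*(q*(r*s)))*(iD*(iD*iE)))) * ((1) * (w*u*(im'*iq)) - (w*t*(im'*is')) * (1)) = w*m*p*r*(iD*iE)
      linear_combination (iE*iD^2*im'*m^2*t*w*r*q*p) * his + (-iE*iD^2*im'*m^2*w*u*s*r*p) * hiq + (iE*iD^2*m*t*w*r*q*p - iE*iD^2*m*w*u*s*r*p) * him + (-iE*iD^2*D*m*w*r + iE*iD^2*m*t*w*r*q - iE*iD^2*m*w*u*s*r) * hpd + (iE*iD^2*m*t*w*r*a - iE*iD^2*m*t*w*r) * hqd + (-iE*iD^2*D*m*w*a + iE*iD^2*D*m*w + iE*iD^2*m*t*w*a*b - iE*iD^2*m*t*w*a - iE*iD^2*m*t*w*b + iE*iD^2*m*t*w - iE*iD^2*m*w*u*s*a + iE*iD^2*m*w*u*s) * hrd + (-iE*iD^2*D*m*a*c + iE*iD^2*D*m*a + iE*iD^2*D*m*c - iE*iD^2*D*m + iE*iD^2*m*t*a*b*c - iE*iD^2*m*t*a*b - iE*iD^2*m*t*a*c + iE*iD^2*m*t*a - iE*iD^2*m*t*b*c + iE*iD^2*m*t*b + iE*iD^2*m*t*c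 - iE*iD^2*m*t + iE*iD^2*m*a^2*c*d - iE*iD^2*m*a^2*c - iE*iD^2*m*a^2*d + iE*iD^2*m*a^2 - iE*iD^2*m*a*b*c*d + iE*iD^2*m*a*b*c + iE*iD^2*m*a*b*d - iE*iD^2*m*a*b - iE*iD^2*m*a*c*d + iE*iD^2*m*a*c + iE*iD^2*m*a*d - iE*iD^2*m*a + iE*iD^2*m*b*c*d - iE*iD^2*m*b*c - iE*iD^2*m*b*d + iE*iD^2*m*b) * hwd + (-iE*iD^2*m*a*b^2*c + iE*iD^2*m*a*b^2 + iE*iD^2*m*a*b*c*d + iE*iD^2*m*a*b*c - iE*iD^2*m*a*b*d - iE*iD^2*m*a*b - iE*iD^2*m*a*c*d + iE*iD^2*m*a*d + iE*iD^2*m*b^2*c - iE*iD^2*m*b^2 - iE*iD^2*m*b*c*d - iE*iD^2*m*b*c + iE*iD^2*m*b*d + iE*iD^2*m*b + iE*iD^2*m*c*d - iE*iD^2*m*d) * htd + (-iE*iD^2*m*w*u*a*c + iE*iD^2*m*w*u*a + iE*iD^2*m*w*u*c - iE*iD^2*m*w*u) * hsd + (-iE*iD^2*m*w*a*c*d + iE*iD^2*m*w*a*c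 + iE*iD^2*m*w*a*d - iE*iD^2*m*w*a + iE*iD^2*m*w*c*d - iE*iD^2*m*w*c - iE*iD^2*m*w*d + iE*iD^2*m*w) * hud + (iE*iD^2*D*a*b*c - iE*iD^2*D*a*b - iE*iD^2*D*a*c*d + iE*iD^2*D*a*d - iE*iD^2*D*b*c + iE*iD^2*D*b + iE*iD^2*D*c*d - iE*iD^2*D*d - iE*iD^2*a^2*b*c*d + iE*iD^2*a^2*b*c + iE*iD^2*a^2*b*d - iE*iD^2*a^2*b + iE*iD^2*a^2*c*d^2 - iE*iD^2*a^2*c*d - iE*iD^2*a^2*d^2 + iE*iD^2*a^2*d + iE*iD^2*a*b^2*c^2 - 2*iE*iD^2*a*b^2*c + iE*iD^2*a*b^2 - iE*iD^2*a*b*c^2*d - iE*iD^2*a*b*c^2 + 4*iE*iD^2*a*b*c*d - 3*iE*iD^2*a*b*d + iE*iD^2*a*b + iE*iD^2*a*c^2*d - 2*iE*iD^2*a*c*d^2 + 2*iE*iD^2*a*d^2 - iE*iD^2*a*d - iE*iD^2*b^2*c^2 + 2*iE*iD^2*b^2*c - iE*iD^2*b^2 + iE*iD^2*b*c^2*d +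 iE*iD^2*b*c^2 - 3*iE*iD^2*b*c*d - iE*iD^2*b*c + 2*iE*iD^2*b*d - iE*iD^2*c^2*d + iE*iD^2*c*d^2 + iE*iD^2*c*d - iE*iD^2*d^2) * hmd + (iE*iD*m*w*r*p) * hiD + (iE*iD^2*a^2*b*c*d - iE*iD^2*a^2*b*d - iE*iD^2*a^2*c*d^2 + iE*iD^2*a^2*d^2 - iE*iD^2*a*b^2*c^2 + iE*iD^2*a*b^2*c + iE*iD^2*a*b*c^2*d - 2*iE*iD^2*a*b*c*d + iE*iD^2*a*b*d + iE*iD^2*a*c*d^2 - iE*iD^2*a*d^2 + iE*iD^2*b^2*c^2 - iE*iD^2*b^2*c - iE*iD^2*b*c^2*d + iE*iD^2*b*c*d) * hDd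
    · show (-(m*m*(p*(q*(r*s)))*(iD*(iD*iE)))) * (-((1) * (w*u*(im'*iq))) + (1) * (1)) = -(b*m*p*r*s*(iD*iE))
      linear_combination (iE*iD^2*im'*m^2*w*u*s*r*p) * hiq + (iE*iD^2*m*w*u*s*r*p) * him + (iE*iD^2*D*m*s*r*b - iE*iD^2*m^2*s*r*q + iE*iD^2*m*w*u*s*r) * hpd + (-iE*iD^2*m^2*s*r*a + iE*iD^2*m^2*s*r) * hqd + (iE*iD^2*D*m*s*a*b - iE*iD^2*D*m*s*b - iE*iD^2*m^2*s*a*b + iE*iD^2*m^2*s*a + iE*iD^2*m^2*s*b - iE*iD^2*m^2*s + iE*iD^2*m*w*u*s*a - iE*iD^2*m*w*u*s) * hrd + (iE*iD^2*D*m*a*b*c - iE*iD^2*D*m*a*b - iE*iD^2*D*m*b*c + iE*iD^2*D*m*b - iE*iD^2*m^2*a*b*c + iE*iD^2*m^2*a*b + iE*iD^2*m^2*a*c - iE*iD^2*m^2*a + iE*iD^2*m^2*b*c - iE*iD^2*m^2*b - iE*iD^2*m^2*c + iE*iD^2*m^2 + iE*iD^2*m*w*u*a*c - iE*iD^2*m*w*u*a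 - iE*iD^2*m*w*u*c + iE*iD^2*m*w*u) * hsd + (iE*iD^2*D*a*b*c*d - iE*iD^2*D*a*b*c - iE*iD^2*D*a*b*d + iE*iD^2*D*a*b - iE*iD^2*D*b*c*d + iE*iD^2*D*b*c + iE*iD^2*D*b*d - iE*iD^2*D*b - iE*iD^2*m*a*b*c*d + iE*iD^2*m*a*b*c + iE*iD^2*m*a*b*d - iE*iD^2*m*a*b + iE*iD^2*m*a*c*d - iE*iD^2*m*a*c - iE*iD^2*m*a*d + iE*iD^2*m*a + iE*iD^2*m*b*c*d - iE*iD^2*m*b*c - iE*iD^2*m*b*d + iE*iD^2*m*b - iE*iD^2*m*c*d + iE*iD^2*m*c + iE*iD^2*m*d - iE*iD^2*m - iE*iD^2*a^2*b*c*d^2 + 2*iE*iD^2*a^2*b*c*d - iE*iD^2*a^2*b*c + iE*iD^2*a^2*b*d^2 - 2*iE*iD^2*a^2*b*d + iE*iD^2*a^2*b + iE*iD^2*a*b^2*c^2*d - iE*iD^2*a*b^2*c^2 - 2*iE*iD^2*a*b^2*c*d + 2*iE*iD^2*a*b^2*c + iE*iD^2*a*b^2*d - iE*iD^2*a*b^2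 - iE*iD^2*a*b*c^2*d + iE*iD^2*a*b*c^2 + 2*iE*iD^2*a*b*c*d^2 - 2*iE*iD^2*a*b*c*d - 2*iE*iD^2*a*b*d^2 + 3*iE*iD^2*a*b*d - iE*iD^2*a*b - iE*iD^2*b^2*c^2*d + iE*iD^2*b^2*c^2 + 2*iE*iD^2*b^2*c*d - 2*iE*iD^2*b^2*c - iE*iD^2*b^2*d + iE*iD^2*b^2 + iE*iD^2*b*c^2*d - iE*iD^2*b*c^2 - iE*iD^2*b*c*d^2 + iE*iD^2*b*c + iE*iD^2*b*d^2 - iE*iD^2*b*d) * hmd + (iE*iD^2*m*w*a*c*d - iE*iD^2*m*w*a*c - iE*iD^2*m*w*a*d + iE*iD^2*m*w*a - iE*iD^2*m*w*c*d + iE*iD^2*m*w*c + iE*iD^2*m*w*d - iE*iD^2*m*w) * hud + (-iE*iD^2*m*a^2*c*d + iE*iD^2*m*a^2*c + iE*iD^2*m*a^2*d - iE*iD^2*m*a^2 + iE*iD^2*m*a*b*c*d - iE*iD^2*m*a*b*c - iE*iD^2*m*a*b*d + iE*iD^2*m*a*b + iE*iD^2*m*a*c*d - iE*iD^2*m*a*c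 - iE*iD^2*m*a*d + iE*iD^2*m*a - iE*iD^2*m*b*c*d + iE*iD^2*m*b*c + iE*iD^2*m*b*d - iE*iD^2*m*b) * hwd + (-iE*iD*m*s*r*p*b) * hiD + (iE*iD^2*a^2*b*c*d^2 - iE*iD^2*a^2*b*c*d - iE*iD^2*a^2*b*d^2 + iE*iD^2*a^2*b*d - iE*iD^2*a*b^2*c^2*d + iE*iD^2*a*b^2*c^2 + iE*iD^2*a*b^2*c*d - iE*iD^2*a*b^2*c - iE*iD^2*a*b*c*d^2 + iE*iD^2*a*b*c*d + iE*iD^2*a*b*d^2 - iE*iD^2*a*b*d + iE*iD^2*b^2*c^2*d - iE*iD^2*b^2*c^2 - iE*iD^2*b^2*c*d + iE*iD^2*b^2*c) * hDd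
    · show (-(m*m*(p*(q*(r*s)))*(iD*(iD*iE)))) * ((1) * (w*t*(im'*is')) - (1) * (1)) = d*m*p*q*r*(iD*iE)
      linear_combination (-iE*iD^2*im'*m^2*t*w*r*q*p) * his + (-iE*iD^2*m*t*w*r*q*p) * him + (-iE*iD^2*D*m*r*q*d + iE*iD^2*m^2*s*r*q - iE*iD^2*m*t*w*r*q) * hpd + (-iE*iD^2*D*m*r*a*d + iE*iD^2*D*m*r*d + iE*iD^2*m^2*s*r*a - iE*iD^2*m^2*s*r - iE*iD^2*m*t*w*r*a + iE*iD^2*m*t*w*r) * hqd + (-iE*iD^2*D*m*a*b*d + iE*iD^2*D*m*a*d + iE*iD^2*D*m*b*d - iE*iD^2*D*m*d + iE*iD^2*m^2*s*a*b - iE*iD^2*m^2*s*a - iE*iD^2*m^2*s*b + iE*iD^2*m^2*s - iE*iD^2*m*t*w*a*b + iE*iD^2*m*t*w*a + iE*iD^2*m*t*w*b - iE*iD^2*m*t*w) * hrd + (iE*iD^2*m^2*a*b*c - iE*iD^2*m^2*a*b - iE*iD^2*m^2*a*c + iE*iD^2*m^2*a - iE*iD^2*m^2*b*c + iE*iD^2*m^2*b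 + iE*iD^2*m^2*c - iE*iD^2*m^2) * hsd + (-iE*iD^2*D*a*b*c*d + iE*iD^2*D*a*b*d + iE*iD^2*D*a*c*d - iE*iD^2*D*a*d + iE*iD^2*D*b*c*d - iE*iD^2*D*b*d - iE*iD^2*D*c*d + iE*iD^2*D*d + iE*iD^2*m*a*b*c*d - iE*iD^2*m*a*b*c - iE*iD^2*m*a*b*d + iE*iD^2*m*a*b - iE*iD^2*m*a*c*d + iE*iD^2*m*a*c + iE*iD^2*m*a*d - iE*iD^2*m*a - iE*iD^2*m*b*c*d + iE*iD^2*m*b*c + iE*iD^2*m*b*d - iE*iD^2*m*b + iE*iD^2*m*c*d - iE*iD^2*m*c - iE*iD^2*m*d + iE*iD^2*m + iE*iD^2*a^2*b*c*d^2 - iE*iD^2*a^2*b*c*d - iE*iD^2*a^2*b*d^2 + iE*iD^2*a^2*b*d - iE*iD^2*a^2*c*d^2 + iE*iD^2*a^2*c*d + iE*iD^2*a^2*d^2 - iE*iD^2*a^2*d - iE*iD^2*a*b^2*c^2*d + 2*iE*iD^2*a*b^2*c*d - iE*iD^2*a*b^2*d + 2*iE*iD^2*a*b*c^2*d - 2*iE*iD^2*a*b*c*d^2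 - 2*iE*iD^2*a*b*c*d + 2*iE*iD^2*a*b*d^2 - iE*iD^2*a*c^2*d + 2*iE*iD^2*a*c*d^2 - 2*iE*iD^2*a*d^2 + iE*iD^2*a*d + iE*iD^2*b^2*c^2*d - 2*iE*iD^2*b^2*c*d + iE*iD^2*b^2*d - 2*iE*iD^2*b*c^2*d + iE*iD^2*b*c*d^2 + 3*iE*iD^2*b*c*d - iE*iD^2*b*d^2 - iE*iD^2*b*d + iE*iD^2*c^2*d - iE*iD^2*c*d^2 - iE*iD^2*c*d + iE*iD^2*d^2) * hmd + (-iE*iD^2*m*t*a*b*c + iE*iD^2*m*t*a*b + iE*iD^2*m*t*a*c - iE*iD^2*m*t*a + iE*iD^2*m*t*b*c - iE*iD^2*m*t*b - iE*iD^2*m*t*c + iE*iD^2*m*t) * hwd + (iE*iD^2*m*a*b^2*c - iE*iD^2*m*a*b^2 - iE*iD^2*m*a*b*c*d - iE*iD^2*m*a*b*c + iE*iD^2*m*a*b*d + iE*iD^2*m*a*b + iE*iD^2*m*a*c*d - iE*iD^2*m*a*d - iE*iD^2*m*b^2*c + iE*iD^2*m*b^2 + iE*iD^2*m*b*c*d +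 iE*iD^2*m*b*c - iE*iD^2*m*b*d - iE*iD^2*m*b - iE*iD^2*m*c*d + iE*iD^2*m*d) * htd + (iE*iD*m*r*q*p*d) * hiD + (-iE*iD^2*a^2*b*c*d^2 + iE*iD^2*a^2*b*d^2 + iE*iD^2*a^2*c*d^2 - iE*iD^2*a^2*d^2 + iE*iD^2*a*b^2*c^2*d - iE*iD^2*a*b^2*c*d - iE*iD^2*a*b*c^2*d + iE*iD^2*a*b*c*d^2 + iE*iD^2*a*b*c*d - iE*iD^2*a*b*d^2 - iE*iD^2*a*c*d^2 + iE*iD^2*a*d^2 - iE*iD^2*b^2*c^2*d + iE*iD^2*b^2*c*d + iE*iD^2*b*c^2*d - iE*iD^2*b*c*d) * hDd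
  have q00 : Phi (!![1, 1, 1; 1, w*t*(im'*is'), v*t*(im'*ir); 1, w*u*(im'*iq), v*u*(im'*ip)] : Matrix (Fin 3) (Fin 3) R) 0 0 = 1 := by
    show Ring.inverse (LamL (Ring.inverse (!![1, 1, 1; 1, w*t*(im'*is'), v*t*(im'*ir); 1, w*u*(im'*iq), v*u*(im'*ip)] : Matrix (Fin 3) (Fin 3) R)) 0 0) = 1
    rw [hBp]
    show Ring.inverse ((u*v*w*t*(iD*iE)) * Ring.inverse (u*v*w*t*(iD*iE)) * (u*v*w*t*(iD*iE)) * Ring.inverse (u*v*w*t*(iD*iE))) = 1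
    rw [rinv_eq (show u*v*w*t*(iD*iE) * (D*E*(iu*(iv*(iw*it')))) = 1 by linear_combination (iE*iD*it'*iw*iv*E*D*t*w*v) * hiu + (iE*iD*it'*iw*E*D*t*w) * hiv + (iE*iD*it'*E*D*t) * hiw + (iE*iD*E*D) * hit + (iE*E) * hiD + (1) * hiE)]
    exact rinv_eq (by linear_combination (iE^2*iD^2*it'^2*iw^2*iv^2*iu*E^2*D^2*t^2*w^2*v^2*u + iE^2*iD^2*it'^2*iw^2*iv^2*E^2*D^2*t^2*w^2*v^2) * hiu + (iE^2*iD^2*it'^2*iw^2*iv*E^2*D^2*t^2*w^2*v + iE^2*iD^2*it'^2*iw^2*E^2*D^2*t^2*w^2) * hiv + (iE^2*iD^2*it'^2*iw*E^2*D^2*t^2*w + iE^2*iD^2*it'^2*E^2*D^2*t^2) * hiw + (iE^2*iD^2*it'*E^2*D^2*t + iE^2*iD^2*E^2*D^2) * hit + (iE^2*iD*E^2*D + iE^2*E^2) * hiD + (iE*E + 1) * hiE)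
  have q01 : Phi (!![1, 1, 1; 1, w*t*(im'*is'), v*t*(im'*ir); 1, w*u*(im'*iq), v*u*(im'*ip)] : Matrix (Fin 3) (Fin 3) R) 0 1 = 1 := by
    show Ring.inverse (LamL (Ring.inverse (!![1, 1, 1; 1, w*t*(im'*is'), v*t*(im'*ir); 1, w*u*(im'*iq), v*u*(im'*ip)] : Matrix (Fin 3) (Fin 3) R)) 1 0) = 1
    rw [hBp]
    show Ring.inverse ((u*v*w*t*(iD*iE)) * Ring.inverse (-(v*m*q*s*(iD*iE))) * (-(v*m*q*s*(iD*iE))) * Ring.inverse (u*v*w*t*(iD*iE))) = 1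
    rw [rinv_eq (show -(v*m*q*s*(iD*iE)) * (-(D*E*(iv*(im'*(iq*is'))))) = 1 by linear_combination (iE*iD*im'*iv*is'*E*D*m*v*s) * hiq + (iE*iD*im'*iv*E*D*m*v) * his + (iE*iD*im'*E*D*m) * hiv + (iE*iD*E*D) * him + (iE*E) * hiD + (1) * hiE), rinv_eq (show u*v*w*t*(iD*iE) * (D*E*(iu*(iv*(iw*it')))) = 1 by linear_combination (iE*iD*it'*iw*iv*E*D*t*w*v) * hiu + (iE*iD*it'*iw*E*D*t*w) * hiv + (iE*iD*it'*E*D*t) * hiw + (iE*iD*E*D) * hit + (iE*E) * hiD + (1) * hiE)]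
    exact rinv_eq (by linear_combination (iE^2*iD^2*im'*it'*iw*iv^2*iu*is'*E^2*D^2*m*t*w*v^2*u*s) * hiq + (iE^2*iD^2*im'*it'*iw*iv^2*iu*E^2*D^2*m*t*w*v^2*u) * his + (iE^2*iD^2*im'*it'*iw*iv^2*E^2*D^2*m*t*w*v^2) * hiu + (iE^2*iD^2*im'*it'*iw*iv*E^2*D^2*m*t*w*v + iE^2*iD^2*im'*it'*iw*E^2*D^2*m*t*w) * hiv + (iE^2*iD^2*im'*it'*E^2*D^2*m*t) * hiw + (iE^2*iD^2*im'*E^2*D^2*m) * hit + (iE^2*iD^2*E^2*D^2) * him + (iE^2*iD*E^2*D + iE^2*E^2) * hiD + (iE*E + 1) * hiE)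
  have q02 : Phi (!![1, 1, 1; 1, w*t*(im'*is'), v*t*(im'*ir); 1, w*u*(im'*iq), v*u*(im'*ip)] : Matrix (Fin 3) (Fin 3) R) 0 2 = 1 := by
    show Ring.inverse (LamL (Ring.inverse (!![1, 1, 1; 1, w*t*(im'*is'), v*t*(im'*ir); 1, w*u*(im'*iq), v*u*(im'*ip)] : Matrix (Fin 3) (Fin 3) R)) 2 0) = 1
    rw [hBp]
    show Ring.inverse ((u*v*w*t*(iD*iE)) * Ring.inverse (w*m*p*r*(iD*iE)) * (w*m*p*r*(iD*iE)) * Ring.inverse (u*v*w*t*(iD*iE))) = 1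
    rw [rinv_eq (show w*m*p*r*(iD*iE) * (D*E*(iw*(im'*(ip*ir)))) = 1 by linear_combination (iE*iD*im'*iw*ir*E*D*m*w*r) * hip + (iE*iD*im'*iw*E*D*m*w) * hir + (iE*iD*im'*E*D*m) * hiw + (iE*iD*E*D) * him + (iE*E) * hiD + (1) * hiE), rinv_eq (show u*v*w*t*(iD*iE) * (D*E*(iu*(iv*(iw*it')))) = 1 by linear_combination (iE*iD*it'*iw*iv*E*D*t*w*v) * hiu + (iE*iD*it'*iw*E*D*t*w) * hiv + (iE*iD*it'*E*D*t) * hiw + (iE*iD*E*D) * hit + (iE*E) * hiD + (1) * hiE)]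
    exact rinv_eq (by linear_combination (iE^2*iD^2*im'*it'*iw^2*iv*iu*ir*E^2*D^2*m*t*w^2*v*u*r) * hip + (iE^2*iD^2*im'*it'*iw^2*iv*iu*E^2*D^2*m*t*w^2*v*u) * hir + (iE^2*iD^2*im'*it'*iw^2*iv*E^2*D^2*m*t*w^2*v) * hiu + (iE^2*iD^2*im'*it'*iw^2*E^2*D^2*m*t*w^2) * hiv + (iE^2*iD^2*im'*it'*iw*E^2*D^2*m*t*w + iE^2*iD^2*im'*it'*E^2*D^2*m*t) * hiw + (iE^2*iD^2*im'*E^2*D^2*m) * hit + (iE^2*iD^2*E^2*D^2) * him + (iE^2*iD*E^2*D + iE^2*E^2) * hiD + (iE*E + 1) * hiE)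
  have q10 : Phi (!![1, 1, 1; 1, w*t*(im'*is'), v*t*(im'*ir); 1, w*u*(im'*iq), v*u*(im'*ip)] : Matrix (Fin 3) (Fin 3) R) 1 0 = 1 := by
    show Ring.inverse (LamL (Ring.inverse (!![1, 1, 1; 1, w*t*(im'*is'), v*t*(im'*ir); 1, w*u*(im'*iq), v*u*(im'*ip)] : Matrix (Fin 3) (Fin 3) R)) 0 1) = 1
    rw [hBp]
    show Ring.inverse ((u*v*w*t*(iD*iE)) * Ring.inverse (u*v*w*t*(iD*iE)) * (-(u*m*r*s*(iD*iE))) * Ring.inverse (-(u*m*r*s*(iD*iE)))) = 1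
    rw [rinv_eq (show u*v*w*t*(iD*iE) * (D*E*(iu*(iv*(iw*it')))) = 1 by linear_combination (iE*iD*it'*iw*iv*E*D*t*w*v) * hiu + (iE*iD*it'*iw*E*D*t*w) * hiv + (iE*iD*it'*E*D*t) * hiw + (iE*iD*E*D) * hit + (iE*E) * hiD + (1) * hiE), rinv_eq (show -(u*m*r*s*(iD*iE)) * (-(D*E*(iu*(im'*(ir*is'))))) = 1 by linear_combination (iE*iD*im'*iu*is'*E*D*m*u*s) * hir + (iE*iD*im'*iu*E*D*m*u) * his + (iE*iD*im'*E*D*m) * hiu + (iE*iD*E*D) * him + (iE*E) * hiD + (1) * hiE)]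
    exact rinv_eq (by linear_combination (iE^2*iD^2*im'*it'*iw*iv*iu^2*is'*E^2*D^2*m*t*w*v*u^2*s) * hir + (iE^2*iD^2*im'*it'*iw*iv*iu^2*E^2*D^2*m*t*w*v*u^2) * his + (iE^2*iD^2*im'*it'*iw*iv*iu*E^2*D^2*m*t*w*v*u + iE^2*iD^2*im'*it'*iw*iv*E^2*D^2*m*t*w*v) * hiu + (iE^2*iD^2*im'*it'*iw*E^2*D^2*m*t*w) * hiv + (iE^2*iD^2*im'*it'*E^2*D^2*m*t) * hiw + (iE^2*iD^2*im'*E^2*D^2*m) * hit + (iE^2*iD^2*E^2*D^2) * him + (iE^2*iD*E^2*D + iE^2*E^2) * hiD + (iE*E + 1) * hiE)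
  have q11 : Phi (!![1, 1, 1; 1, w*t*(im'*is'), v*t*(im'*ir); 1, w*u*(im'*iq), v*u*(im'*ip)] : Matrix (Fin 3) (Fin 3) R) 1 1 = m*s*(ia*(iw*it')) := by
    show Ring.inverse (LamL (Ring.inverse (!![1, 1, 1; 1, w*t*(im'*is'), v*t*(im'*ir); 1, w*u*(im'*iq), v*u*(im'*ip)] : Matrix (Fin 3) (Fin 3) R)) 1 1) = m*s*(ia*(iw*it'))
    rw [hBp]
    show Ring.inverse ((u*v*w*t*(iD*iE)) * Ring.inverse (-(v*m*q*s*(iD*iE))) * (a*m*q*r*s*(iD*iE)) * Ring.inverse (-(u*m*r*s*(iD*iE)))) = m*s*(ia*(iw*it'))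
    rw [rinv_eq (show -(v*m*q*s*(iD*iE)) * (-(D*E*(iv*(im'*(iq*is'))))) = 1 by linear_combination (iE*iD*im'*iv*is'*E*D*m*v*s) * hiq + (iE*iD*im'*iv*E*D*m*v) * his + (iE*iD*im'*E*D*m) * hiv + (iE*iD*E*D) * him + (iE*E) * hiD + (1) * hiE), rinv_eq (show -(u*m*r*s*(iD*iE)) * (-(D*E*(iu*(im'*(ir*is'))))) = 1 by linear_combination (iE*iD*im'*iu*is'*E*D*m*u*s) * hir + (iE*iD*im'*iu*E*D*m*u) * his + (iE*iD*im'*E*D*m) * hiu + (iE*iD*E*D) * him + (iE*E) * hiD + (1) * hiE)]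
    exact rinv_eq (by linear_combination (iE^2*iD^2*im'^2*it'*iw*iv*iu*is'^2*ir*iq*E^2*D^2*m^2*t*w*v*u*s^2*r*q) * hia + (iE^2*iD^2*im'^2*it'*iw*iv*iu*is'^2*ir*E^2*D^2*m^2*t*w*v*u*s^2*r) * hiq + (iE^2*iD^2*im'^2*it'*iw*iv*iu*is'^2*E^2*D^2*m^2*t*w*v*u*s^2) * hir + (iE^2*iD^2*im'^2*it'*iw*iv*iu*is'*E^2*D^2*m^2*t*w*v*u*s + iE^2*iD^2*im'^2*it'*iw*iv*iu*E^2*D^2*m^2*t*w*v*u) * his + (iE^2*iD^2*im'^2*it'*iw*iv*E^2*D^2*m^2*t*w*v) * hiu + (iE^2*iD^2*im'^2*it'*iw*E^2*D^2*m^2*t*w) * hiv + (iE^2*iD^2*im'^2*it'*E^2*D^2*m^2*t) * hiw + (iE^2*iD^2*im'^2*E^2*D^2*m^2) * hit + (iE^2*iD^2*im'*E^2*D^2*m + iE^2*iD^2*E^2*D^2) * him + (iE^2*iD*E^2*D + iE^2*E^2) * hiD + (iE*E + 1) * hiE)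
  have q12 : Phi (!![1, 1, 1; 1, w*t*(im'*is'), v*t*(im'*ir); 1, w*u*(im'*iq), v*u*(im'*ip)] : Matrix (Fin 3) (Fin 3) R) 1 2 = m*r*(ib*(iv*it')) := by
    show Ring.inverse (LamL (Ring.inverse (!![1, 1, 1; 1, w*t*(im'*is'), v*t*(im'*ir); 1, w*u*(im'*iq), v*u*(im'*ip)] : Matrix (Fin 3) (Fin 3) R)) 2 1) = m*r*(ib*(iv*it'))
    rw [hBp]
    show Ring.inverse ((u*v*w*t*(iD*iE)) * Ring.inverse (w*m*p*r*(iD*iE)) * (-(b*m*p*r*s*(iD*iE))) * Ring.inverse (-(u*m*r*s*(iD*iE)))) = m*r*(ib*(iv*it'))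
    rw [rinv_eq (show w*m*p*r*(iD*iE) * (D*E*(iw*(im'*(ip*ir)))) = 1 by linear_combination (iE*iD*im'*iw*ir*E*D*m*w*r) * hip + (iE*iD*im'*iw*E*D*m*w) * hir + (iE*iD*im'*E*D*m) * hiw + (iE*iD*E*D) * him + (iE*E) * hiD + (1) * hiE), rinv_eq (show -(u*m*r*s*(iD*iE)) * (-(D*E*(iu*(im'*(ir*is'))))) = 1 by linear_combination (iE*iD*im'*iu*is'*E*D*m*u*s) * hir + (iE*iD*im'*iu*E*D*m*u) * his + (iE*iD*im'*E*D*m) * hiu + (iE*iD*E*D) * him + (iE*E) * hiD + (1) * hiE)]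
    exact rinv_eq (by linear_combination (iE^2*iD^2*im'^2*it'*iw*iv*iu*is'*ir^2*ip*E^2*D^2*m^2*t*w*v*u*s*r^2*p) * hib + (iE^2*iD^2*im'^2*it'*iw*iv*iu*is'*ir^2*E^2*D^2*m^2*t*w*v*u*s*r^2) * hip + (iE^2*iD^2*im'^2*it'*iw*iv*iu*is'*ir*E^2*D^2*m^2*t*w*v*u*s*r + iE^2*iD^2*im'^2*it'*iw*iv*iu*is'*E^2*D^2*m^2*t*w*v*u*s) * hir + (iE^2*iD^2*im'^2*it'*iw*iv*iu*E^2*D^2*m^2*t*w*v*u) * his + (iE^2*iD^2*im'^2*it'*iw*iv*E^2*D^2*m^2*t*w*v) * hiu + (iE^2*iD^2*im'^2*it'*iw*E^2*D^2*m^2*t*w) * hiv + (iE^2*iD^2*im'^2*it'*E^2*D^2*m^2*t) * hiw + (iE^2*iD^2*im'^2*E^2*D^2*m^2) * hit + (iE^2*iD^2*im'*E^2*D^2*m + iE^2*iD^2*E^2*D^2) * him + (iE^2*iD*E^2*D + iE^2*E^2) * hiD + (iE*E + 1) * hiE)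
  have q20 : Phi (!![1, 1, 1; 1, w*t*(im'*is'), v*t*(im'*ir); 1, w*u*(im'*iq), v*u*(im'*ip)] : Matrix (Fin 3) (Fin 3) R) 2 0 = 1 := by
    show Ring.inverse (LamL (Ring.inverse (!![1, 1, 1; 1, w*t*(im'*is'), v*t*(im'*ir); 1, w*u*(im'*iq), v*u*(im'*ip)] : Matrix (Fin 3) (Fin 3) R)) 0 2) = 1
    rw [hBp]
    show Ring.inverse ((u*v*w*t*(iD*iE)) * Ring.inverse (u*v*w*t*(iD*iE)) * (t*m*p*q*(iD*iE)) * Ring.inverse (t*m*p*q*(iD*iE))) = 1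
    rw [rinv_eq (show u*v*w*t*(iD*iE) * (D*E*(iu*(iv*(iw*it')))) = 1 by linear_combination (iE*iD*it'*iw*iv*E*D*t*w*v) * hiu + (iE*iD*it'*iw*E*D*t*w) * hiv + (iE*iD*it'*E*D*t) * hiw + (iE*iD*E*D) * hit + (iE*E) * hiD + (1) * hiE), rinv_eq (show t*m*p*q*(iD*iE) * (D*E*(it'*(im'*(ip*iq)))) = 1 by linear_combination (iE*iD*im'*it'*iq*E*D*m*t*q) * hip + (iE*iD*im'*it'*E*D*m*t) * hiq + (iE*iD*im'*E*D*m) * hit + (iE*iD*E*D) * him + (iE*E) * hiD + (1) * hiE)]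
    exact rinv_eq (by linear_combination (iE^2*iD^2*im'*it'^2*iw*iv*iu*iq*E^2*D^2*m*t^2*w*v*u*q) * hip + (iE^2*iD^2*im'*it'^2*iw*iv*iu*E^2*D^2*m*t^2*w*v*u) * hiq + (iE^2*iD^2*im'*it'^2*iw*iv*E^2*D^2*m*t^2*w*v) * hiu + (iE^2*iD^2*im'*it'^2*iw*E^2*D^2*m*t^2*w) * hiv + (iE^2*iD^2*im'*it'^2*E^2*D^2*m*t^2) * hiw + (iE^2*iD^2*im'*it'*E^2*D^2*m*t + iE^2*iD^2*im'*E^2*D^2*m) * hit + (iE^2*iD^2*E^2*D^2) * him + (iE^2*iD*E^2*D + iE^2*E^2) * hiD + (iE*E + 1) * hiE)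
  have q21 : Phi (!![1, 1, 1; 1, w*t*(im'*is'), v*t*(im'*ir); 1, w*u*(im'*iq), v*u*(im'*ip)] : Matrix (Fin 3) (Fin 3) R) 2 1 = m*q*(ic*(iw*iu)) := by
    show Ring.inverse (LamL (Ring.inverse (!![1, 1, 1; 1, w*t*(im'*is'), v*t*(im'*ir); 1, w*u*(im'*iq), v*u*(im'*ip)] : Matrix (Fin 3) (Fin 3) R)) 1 2) = m*q*(ic*(iw*iu))
    rw [hBp]
    show Ring.inverse ((u*v*w*t*(iD*iE)) * Ring.inverse (-(v*m*q*s*(iD*iE))) * (-(c*m*p*q*s*(iD*iE))) * Ring.inverse (t*m*p*q*(iD*iE))) = m*q*(ic*(iw*iu))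
    rw [rinv_eq (show -(v*m*q*s*(iD*iE)) * (-(D*E*(iv*(im'*(iq*is'))))) = 1 by linear_combination (iE*iD*im'*iv*is'*E*D*m*v*s) * hiq + (iE*iD*im'*iv*E*D*m*v) * his + (iE*iD*im'*E*D*m) * hiv + (iE*iD*E*D) * him + (iE*E) * hiD + (1) * hiE), rinv_eq (show t*m*p*q*(iD*iE) * (D*E*(it'*(im'*(ip*iq)))) = 1 by linear_combination (iE*iD*im'*it'*iq*E*D*m*t*q) * hip + (iE*iD*im'*it'*E*D*m*t) * hiq + (iE*iD*im'*E*D*m) * hit + (iE*iD*E*D) * him + (iE*E) * hiD + (1) * hiE)]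
    exact rinv_eq (by linear_combination (iE^2*iD^2*im'^2*it'*iw*iv*iu*is'*iq^2*ip*E^2*D^2*m^2*t*w*v*u*s*q^2*p) * hic + (iE^2*iD^2*im'^2*it'*iw*iv*iu*is'*iq^2*E^2*D^2*m^2*t*w*v*u*s*q^2) * hip + (iE^2*iD^2*im'^2*it'*iw*iv*iu*is'*iq*E^2*D^2*m^2*t*w*v*u*s*q + iE^2*iD^2*im'^2*it'*iw*iv*iu*is'*E^2*D^2*m^2*t*w*v*u*s) * hiq + (iE^2*iD^2*im'^2*it'*iw*iv*iu*E^2*D^2*m^2*t*w*v*u) * his + (iE^2*iD^2*im'^2*it'*iw*iv*E^2*D^2*m^2*t*w*v) * hiu + (iE^2*iD^2*im'^2*it'*iw*E^2*D^2*m^2*t*w) * hiv + (iE^2*iD^2*im'^2*it'*E^2*D^2*m^2*t) * hiw + (iE^2*iD^2*im'^2*E^2*D^2*m^2) * hit + (iE^2*iD^2*im'*E^2*D^2*m + iE^2*iD^2*E^2*D^2) * him + (iE^2*iD*E^2*D + iE^2*E^2) * hiD + (iE*E + 1) * hiE)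
  have q22 : Phi (!![1, 1, 1; 1, w*t*(im'*is'), v*t*(im'*ir); 1, w*u*(im'*iq), v*u*(im'*ip)] : Matrix (Fin 3) (Fin 3) R) 2 2 = m*p*(id'*(iv*iu)) := by
    show Ring.inverse (LamL (Ring.inverse (!![1, 1, 1; 1, w*t*(im'*is'), v*t*(im'*ir); 1, w*u*(im'*iq), v*u*(im'*ip)] : Matrix (Fin 3) (Fin 3) R)) 2 2) = m*p*(id'*(iv*iu))
    rw [hBp]
    show Ring.inverse ((u*v*w*t*(iD*iE)) * Ring.inverse (w*m*p*r*(iD*iE)) * (d*m*p*q*r*(iD*iE)) * Ring.inverse (t*m*p*q*(iD*iE))) = m*p*(id'*(iv*iu))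
    rw [rinv_eq (show w*m*p*r*(iD*iE) * (D*E*(iw*(im'*(ip*ir)))) = 1 by linear_combination (iE*iD*im'*iw*ir*E*D*m*w*r) * hip + (iE*iD*im'*iw*E*D*m*w) * hir + (iE*iD*im'*E*D*m) * hiw + (iE*iD*E*D) * him + (iE*E) * hiD + (1) * hiE), rinv_eq (show t*m*p*q*(iD*iE) * (D*E*(it'*(im'*(ip*iq)))) = 1 by linear_combination (iE*iD*im'*it'*iq*E*D*m*t*q) * hip + (iE*iD*im'*it'*E*D*m*t) * hiq + (iE*iD*im'*E*D*m) * hit + (iE*iD*E*D) * him + (iE*E) * hiD + (1) * hiE)]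
    exact rinv_eq (by linear_combination (iE^2*iD^2*im'^2*it'*iw*iv*iu*ir*iq*ip^2*E^2*D^2*m^2*t*w*v*u*r*q*p^2) * hid + (iE^2*iD^2*im'^2*it'*iw*iv*iu*ir*iq*ip*E^2*D^2*m^2*t*w*v*u*r*q*p + iE^2*iD^2*im'^2*it'*iw*iv*iu*ir*iq*E^2*D^2*m^2*t*w*v*u*r*q) * hip + (iE^2*iD^2*im'^2*it'*iw*iv*iu*ir*E^2*D^2*m^2*t*w*v*u*r) * hiq + (iE^2*iD^2*im'^2*it'*iw*iv*iu*E^2*D^2*m^2*t*w*v*u) * hir + (iE^2*iD^2*im'^2*it'*iw*iv*E^2*D^2*m^2*t*w*v) * hiu + (iE^2*iD^2*im'^2*it'*iw*E^2*D^2*m^2*t*w) * hiv + (iE^2*iD^2*im'^2*it'*E^2*D^2*m^2*t) * hiw + (iE^2*iD^2*im'^2*E^2*D^2*m^2) * hit + (iE^2*iD^2*im'*E^2*D^2*m + iE^2*iD^2*E^2*D^2) * him + (iE^2*iD*E^2*D + iE^2*E^2) * hiD + (iE*E + 1) * hiE)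
  have hPhi2 : Phi (!![1, 1, 1; 1, w*t*(im'*is'), v*t*(im'*ir); 1, w*u*(im'*iq), v*u*(im'*ip)] : Matrix (Fin 3) (Fin 3) R) = !![1, 1, 1; 1, m*s*(ia*(iw*it')), m*r*(ib*(iv*it')); 1, m*q*(ic*(iw*iu)), m*p*(id'*(iv*iu))] := by
    ext i j
    fin_cases i <;> fin_cases j
    · exact q00
    · exact q01
    · exact q02
    · exact q10
    · exact q11
    · exact q12
    · exact q20
    · exact q21
    · exact q22
  have hJ2A : J2 (!![1,1,1;1,a,b;1,c,d] : Matrix (Fin 3) (Fin 3) R) = !![1, 1, 1; 1, ia, ic; 1, ib, id'] := by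
    ext i j
    fin_cases i <;> fin_cases j
    · show Ring.inverse (1 : R) = 1
      exact rinv_eq (one_mul 1)
    · show Ring.inverse (1 : R) = 1
      exact rinv_eq (one_mul 1)
    · show Ring.inverse (1 : R) = 1
      exact rinv_eq (one_mul 1)
    · show Ring.inverse (1 : R) = 1
      exact rinv_eq (one_mul 1)
    · show Ring.inverse (a : R) = ia
      exact rinv_eq hia
    · show Ring.inverse (c : R) = ic
      exact rinv_eq hic
    · show Ring.inverse (1 : R) = 1
      exact rinv_eq (one_mul 1)
    · show Ring.inverse (b : R) = ib
      exact rinv_eq hib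
    · show Ring.inverse (d : R) = id'
      exact rinv_eq hid
  have hdetM2 : Ring.inverse (Matrix.det (!![1, 1, 1; 1, ia, ic; 1, ib, id'] : Matrix (Fin 3) (Fin 3) R)) = a*(b*(c*(d*iE))) := by
    apply rinv_eq
    rw [Matrix.det_fin_three]
    show ((1) * (ia) * (id') - (1) * (ic) * (ib) - (1) * (1) * (id') + (1) * (ic) * (1) + (1) * (1) * (ib) - (1) * (ia) * (1)) * (a*(b*(c*(d*iE)))) = 1
    linear_combination (iE*id'*b*c*d - iE*b*c*d) * hia + (-iE*a*b*c + iE*b*c) * hid + (-iE*ic*a*c*d + iE*a*c*d) * hib + (iE*a*b*d - iE*a*d) * hic + (1) * hiE + (-iE) * hEd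
  have hBpp : Ring.inverse (!![1, 1, 1; 1, ia, ic; 1, ib, id'] : Matrix (Fin 3) (Fin 3) R) = !![-(m*iE), a*c*w*iE, -(b*d*v*iE); a*b*t*iE, -(a*b*c*s*iE), a*b*d*r*iE; -(c*d*u*iE), a*c*d*q*iE, -(b*c*d*p*iE)] := by
    rw [← Matrix.nonsing_inv_eq_ringInverse, Matrix.inv_def, Matrix.adjugate_fin_three, hdetM2]
    ext i j
    fin_cases i <;> fin_cases j
    · show (a*(b*(c*(d*iE)))) * ((ia) * (id') - (ic) * (ib)) = -(m*iE)
      linear_combination (iE*id'*b*c*d) * hia + (iE*b*c) * hid + (-iE*ic*a*c*d) * hib + (-iE*a*d) * hic + (iE) * hmd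
    · show (a*(b*(c*(d*iE)))) * (-((1) * (id')) + (1) * (ib)) = a*c*w*iE
      linear_combination (-iE*a*b*c) * hid + (iE*a*c*d) * hib + (-iE*a*c) * hwd
    · show (a*(b*(c*(d*iE)))) * ((1) * (ic) - (1) * (ia)) = -(b*d*v*iE)
      linear_combination (iE*a*b*d) * hic + (-iE*b*c*d) * hia + (iE*b*d) * hvd
    · show (a*(b*(c*(d*iE)))) * (-((1) * (id')) + (ic) * (1)) = a*b*t*iE
      linear_combination (-iE*a*b*c) * hid + (iE*a*b*d) * hic + (-iE*a*b) * htd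
    · show (a*(b*(c*(d*iE)))) * ((1) * (id') - (1) * (1)) = -(a*b*c*s*iE)
      linear_combination (iE*a*b*c) * hid + (iE*a*b*c) * hsd
    · show (a*(b*(c*(d*iE)))) * (-((1) * (ic)) + (1) * (1)) = a*b*d*r*iE
      linear_combination (-iE*a*b*d) * hic + (-iE*a*b*d) * hrd
    · show (a*(b*(c*(d*iE)))) * ((1) * (ib) - (ia) * (1)) = -(c*d*u*iE)
      linear_combination (iE*a*c*d) * hib + (-iE*b*c*d) * hia + (iE*c*d) * hud
    · show (a*(b*(c*(d*iE)))) * (-((1) * (ib)) + (1) * (1)) = a*c*d*q*iE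
      linear_combination (-iE*a*c*d) * hib + (-iE*a*c*d) * hqd
    · show (a*(b*(c*(d*iE)))) * ((1) * (ia) - (1) * (1)) = -(b*c*d*p*iE)
      linear_combination (iE*b*c*d) * hia + (iE*b*c*d) * hpd
  have hPIA : PhiInv (!![1,1,1;1,a,b;1,c,d] : Matrix (Fin 3) (Fin 3) R) = LamR (!![-(m*iE), a*c*w*iE, -(b*d*v*iE); a*b*t*iE, -(a*b*c*s*iE), a*b*d*r*iE; -(c*d*u*iE), a*c*d*q*iE, -(b*c*d*p*iE)] : Matrix (Fin 3) (Fin 3) R) := by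
    show LamR (Ring.inverse (J2 (!![1,1,1;1,a,b;1,c,d] : Matrix (Fin 3) (Fin 3) R))) = _
    rw [hJ2A, hBpp]
  constructor
  · rw [hPhiA, hPhi2]
    ext i j
    fin_cases i <;> fin_cases j
    · show (1 : R) * (1) * (1) = 1
      ring1
    · show (1 : R) * (1) * (1) = 1
      ring1
    · show (1 : R) * (1) * (1) = 1
      ring1
    · show (1 : R) * (1) * (1) = 1
      ring1
    · show (a : R) * (w*t*(im'*is')) * (m*s*(ia*(iw*it'))) = 1
      linear_combination (im'*it'*iw*is'*m*t*w*s) * hia + (im'*it'*iw*m*t*w) * his + (im'*it'*m*t) * hiw + (im'*m) * hit + (1) * him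
    · show (b : R) * (v*t*(im'*ir)) * (m*r*(ib*(iv*it'))) = 1
      linear_combination (im'*it'*iv*ir*m*t*v*r) * hib + (im'*it'*iv*m*t*v) * hir + (im'*it'*m*t) * hiv + (im'*m) * hit + (1) * him
    · show (1 : R) * (1) * (1) = 1
      ring1
    · show (c : R) * (w*u*(im'*iq)) * (m*q*(ic*(iw*iu))) = 1
      linear_combination (im'*iw*iu*iq*m*w*u*q) * hic + (im'*iw*iu*m*w*u) * hiq + (im'*iw*m*w) * hiu + (im'*m) * hiw + (1) * him
    · show (d : R) * (v*u*(im'*ip)) * (m*p*(id'*(iv*iu))) = 1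
      linear_combination (im'*iv*iu*ip*m*v*u*p) * hid + (im'*iv*iu*m*v*u) * hip + (im'*iv*m*v) * hiu + (im'*m) * hiv + (1) * him
  · rw [hPhiA, hPIA]
    ext i j
    fin_cases i <;> fin_cases j
    · show (1 : R) * (1) * (Ring.inverse (-(m*iE)) * (-(m*iE)) * Ring.inverse (-(m*iE)) * (-(m*iE))) = 1
      rw [rinv_eq (show -(m*iE) * (-(E*im')) = 1 by linear_combination (iE*E) * him + (1) * hiE)]
      linear_combination (iE^2*im'*E^2*m + iE^2*E^2) * him + (iE*E + 1) * hiE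
    · show (1 : R) * (1) * (Ring.inverse (-(m*iE)) * (a*c*w*iE) * Ring.inverse (a*c*w*iE) * (-(m*iE))) = 1
      rw [rinv_eq (show -(m*iE) * (-(E*im')) = 1 by linear_combination (iE*E) * him + (1) * hiE), rinv_eq (show a*c*w*iE * (E*(ia*(ic*iw))) = 1 by linear_combination (iE*iw*ic*E*w*c) * hia + (iE*iw*E*w) * hic + (iE*E) * hiw + (1) * hiE)]
      linear_combination (iE^2*im'*iw*ic*E^2*m*w*c) * hia + (iE^2*im'*iw*E^2*m*w) * hic + (iE^2*im'*E^2*m) * hiw + (iE^2*E^2) * him + (iE*E + 1) * hiE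
    · show (1 : R) * (1) * (Ring.inverse (-(m*iE)) * (-(b*d*v*iE)) * Ring.inverse (-(b*d*v*iE)) * (-(m*iE))) = 1
      rw [rinv_eq (show -(m*iE) * (-(E*im')) = 1 by linear_combination (iE*E) * him + (1) * hiE), rinv_eq (show -(b*d*v*iE) * (-(E*(ib*(id'*iv)))) = 1 by linear_combination (iE*iv*id'*E*v*d) * hib + (iE*iv*E*v) * hid + (iE*E) * hiv + (1) * hiE)]
      linear_combination (iE^2*im'*iv*id'*E^2*m*v*d) * hib + (iE^2*im'*iv*E^2*m*v) * hid + (iE^2*im'*E^2*m) * hiv + (iE^2*E^2) * him + (iE*E + 1) * hiE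
    · show (1 : R) * (1) * (Ring.inverse (a*b*t*iE) * (a*b*t*iE) * Ring.inverse (-(m*iE)) * (-(m*iE))) = 1
      rw [rinv_eq (show a*b*t*iE * (E*(ia*(ib*it'))) = 1 by linear_combination (iE*it'*ib*E*t*b) * hia + (iE*it'*E*t) * hib + (iE*E) * hit + (1) * hiE), rinv_eq (show -(m*iE) * (-(E*im')) = 1 by linear_combination (iE*E) * him + (1) * hiE)]
      linear_combination (iE^2*im'*it'*ib*E^2*m*t*b) * hia + (iE^2*im'*it'*E^2*m*t) * hib + (iE^2*im'*E^2*m) * hit + (iE^2*E^2) * him + (iE*E + 1) * hiE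
    · show (a : R) * (w*t*(im'*is')) * (Ring.inverse (a*b*t*iE) * (-(a*b*c*s*iE)) * Ring.inverse (a*c*w*iE) * (-(m*iE))) = 1
      rw [rinv_eq (show a*b*t*iE * (E*(ia*(ib*it'))) = 1 by linear_combination (iE*it'*ib*E*t*b) * hia + (iE*it'*E*t) * hib + (iE*E) * hit + (1) * hiE), rinv_eq (show a*c*w*iE * (E*(ia*(ic*iw))) = 1 by linear_combination (iE*iw*ic*E*w*c) * hia + (iE*iw*E*w) * hic + (iE*E) * hiw + (1) * hiE)]
      linear_combination (iE^2*im'*it'*iw*is'*ic*ib*ia*E^2*m*t*w*s*a*b*c + iE^2*im'*it'*iw*is'*ic*ib*E^2*m*t*w*s*b*c) * hia + (iE^2*im'*it'*iw*is'*ic*E^2*m*t*w*s*c) * hib + (iE^2*im'*it'*iw*is'*E^2*m*t*w*s) * hic + (iE^2*im'*it'*iw*E^2*m*t*w) * his + (iE^2*im'*it'*E^2*m*t) * hiw + (iE^2*im'*E^2*m) * hit + (iE^2*E^2) * him + (iE*E + 1) * hiE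
    · show (b : R) * (v*t*(im'*ir)) * (Ring.inverse (a*b*t*iE) * (a*b*d*r*iE) * Ring.inverse (-(b*d*v*iE)) * (-(m*iE))) = 1
      rw [rinv_eq (show a*b*t*iE * (E*(ia*(ib*it'))) = 1 by linear_combination (iE*it'*ib*E*t*b) * hia + (iE*it'*E*t) * hib + (iE*E) * hit + (1) * hiE), rinv_eq (show -(b*d*v*iE) * (-(E*(ib*(id'*iv)))) = 1 by linear_combination (iE*iv*id'*E*v*d) * hib + (iE*iv*E*v) * hid + (iE*E) * hiv + (1) * hiE)]
      linear_combination (iE^2*im'*it'*iv*ir*id'*ib^2*E^2*m*t*v*r*b^2*d) * hia + (iE^2*im'*it'*iv*ir*id'*ib*E^2*m*t*v*r*b*d + iE^2*im'*it'*iv*ir*id'*E^2*m*t*v*r*d) * hib + (iE^2*im'*it'*iv*ir*E^2*m*t*v*r) * hid + (iE^2*im'*it'*iv*E^2*m*t*v) * hir + (iE^2*im'*it'*E^2*m*t) * hiv + (iE^2*im'*E^2*m) * hit + (iE^2*E^2) * him + (iE*E + 1) * hiE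
    · show (1 : R) * (1) * (Ring.inverse (-(c*d*u*iE)) * (-(c*d*u*iE)) * Ring.inverse (-(m*iE)) * (-(m*iE))) = 1
      rw [rinv_eq (show -(c*d*u*iE) * (-(E*(ic*(id'*iu)))) = 1 by linear_combination (iE*iu*id'*E*u*d) * hic + (iE*iu*E*u) * hid + (iE*E) * hiu + (1) * hiE), rinv_eq (show -(m*iE) * (-(E*im')) = 1 by linear_combination (iE*E) * him + (1) * hiE)]
      linear_combination (iE^2*im'*iu*id'*E^2*m*u*d) * hic + (iE^2*im'*iu*E^2*m*u) * hid + (iE^2*im'*E^2*m) * hiu + (iE^2*E^2) * him + (iE*E + 1) * hiE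
    · show (c : R) * (w*u*(im'*iq)) * (Ring.inverse (-(c*d*u*iE)) * (a*c*d*q*iE) * Ring.inverse (a*c*w*iE) * (-(m*iE))) = 1
      rw [rinv_eq (show -(c*d*u*iE) * (-(E*(ic*(id'*iu)))) = 1 by linear_combination (iE*iu*id'*E*u*d) * hic + (iE*iu*E*u) * hid + (iE*E) * hiu + (1) * hiE), rinv_eq (show a*c*w*iE * (E*(ia*(ic*iw))) = 1 by linear_combination (iE*iw*ic*E*w*c) * hia + (iE*iw*E*w) * hic + (iE*E) * hiw + (1) * hiE)]
      linear_combination (iE^2*im'*iw*iu*iq*id'*ic^2*E^2*m*w*u*q*c^2*d) * hia + (iE^2*im'*iw*iu*iq*id'*ic*E^2*m*w*u*q*c*d + iE^2*im'*iw*iu*iq*id'*E^2*m*w*u*q*d) * hic + (iE^2*im'*iw*iu*iq*E^2*m*w*u*q) * hid + (iE^2*im'*iw*iu*E^2*m*w*u) * hiq + (iE^2*im'*iw*E^2*m*w) * hiu + (iE^2*im'*E^2*m) * hiw + (iE^2*E^2) * him + (iE*E + 1) * hiE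
    · show (d : R) * (v*u*(im'*ip)) * (Ring.inverse (-(c*d*u*iE)) * (-(b*c*d*p*iE)) * Ring.inverse (-(b*d*v*iE)) * (-(m*iE))) = 1
      rw [rinv_eq (show -(c*d*u*iE) * (-(E*(ic*(id'*iu)))) = 1 by linear_combination (iE*iu*id'*E*u*d) * hic + (iE*iu*E*u) * hid + (iE*E) * hiu + (1) * hiE), rinv_eq (show -(b*d*v*iE) * (-(E*(ib*(id'*iv)))) = 1 by linear_combination (iE*iv*id'*E*v*d) * hib + (iE*iv*E*v) * hid + (iE*E) * hiv + (1) * hiE)]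
      linear_combination (iE^2*im'*iv*iu*ip*id'^2*ic*E^2*m*v*u*p*c*d^2) * hib + (iE^2*im'*iv*iu*ip*id'^2*E^2*m*v*u*p*d^2) * hic + (iE^2*im'*iv*iu*ip*id'*E^2*m*v*u*p*d + iE^2*im'*iv*iu*ip*E^2*m*v*u*p) * hid + (iE^2*im'*iv*iu*E^2*m*v*u) * hip + (iE^2*im'*iv*E^2*m*v) * hiu + (iE^2*im'*E^2*m) * hiv + (iE^2*E^2) * him + (iE*E + 1) * hiE

set_option maxHeartbeats 2000000 in
/-- Over a commutative unital ring, for `A ∈ Ŝ = M̂₃(R) ∩ dom(Φ²)`: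
`A ⋆ Φ(A) ⋆ Φ²(A) = 1` and `A ⋆ Φ(A) ⋆ Φ⁻¹(A) = 1`, where `⋆` is the Hadamard product
and `1` is the all-ones matrix. -/
theorem hadamard_identity_commutative {R : Type*} [CommRing R]
    (A : Matrix (Fin 3) (Fin 3) R) (hA : A ∈ Shat R) :
    Matrix.hadamard (Matrix.hadamard A (Phi A)) (Phi (Phi A)) =
      Matrix.of (fun _ _ => (1 : R)) ∧
    Matrix.hadamard (Matrix.hadamard A (Phi A)) (PhiInv A) =
      Matrix.of (fun _ _ => (1 : R)) := by
  obtain ⟨⟨hsub, hJ2u⟩, hhat⟩ := hA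
  have h0k : ∀ k, A 0 k = 1 := fun k => (hhat k).1
  have hk0 : ∀ k, A k 0 = 1 := fun k => (hhat k).2
  have unit1 : ∀ j k : Fin 3, IsUnit (A j k) := by
    intro j k
    have h := hsub 1 ![j] ![k] (fun x y _ => Subsingleton.elim x y)
      (fun x y _ => Subsingleton.elim x y)
    rw [Matrix.isUnit_iff_isUnit_det, Matrix.det_fin_one, Matrix.submatrix_apply] at h
    simpa using h
  have unit2 : ∀ (r c : Fin 2 → Fin 3), Function.Injective r → Function.Injective c →
      IsUnit (A (r 0) (c 0) * A (r 1) (c 1) - A (r 0) (c 1) * A (r 1) (c 0)) := by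
    intro r c hr hc
    have h := hsub 2 r c hr hc
    rwa [Matrix.isUnit_iff_isUnit_det, Matrix.det_fin_two, Matrix.submatrix_apply,
      Matrix.submatrix_apply, Matrix.submatrix_apply, Matrix.submatrix_apply] at h
  have hpu : IsUnit (A 1 1 - 1) := by
    have h := unit2 ![0,1] ![0,1] (by decide) (by decide)
    simp only [Matrix.cons_val_zero, Matrix.cons_val_one, Matrix.head_cons] at h
    rw [h0k 0, h0k 1, hk0 1] at h
    rwa [show (1:R) * A 1 1 - 1 * 1 = A 1 1 - 1 from by ring] at h
  have hqu : IsUnit (A 1 2 - 1) := by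
    have h := unit2 ![0,1] ![0,2] (by decide) (by decide)
    simp only [Matrix.cons_val_zero, Matrix.cons_val_one, Matrix.head_cons] at h
    rw [h0k 0, h0k 2, hk0 1] at h
    rwa [show (1:R) * A 1 2 - 1 * 1 = A 1 2 - 1 from by ring] at h
  have hru : IsUnit (A 2 1 - 1) := by
    have h := unit2 ![0,2] ![0,1] (by decide) (by decide)
    simp only [Matrix.cons_val_zero, Matrix.cons_val_one, Matrix.head_cons] at h
    rw [h0k 0, h0k 1, hk0 2] at h
    rwa [show (1:R) * A 2 1 - 1 * 1 = A 2 1 - 1 from by ring] at h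
  have hsu : IsUnit (A 2 2 - 1) := by
    have h := unit2 ![0,2] ![0,2] (by decide) (by decide)
    simp only [Matrix.cons_val_zero, Matrix.cons_val_one, Matrix.head_cons] at h
    rw [h0k 0, h0k 2, hk0 2] at h
    rwa [show (1:R) * A 2 2 - 1 * 1 = A 2 2 - 1 from by ring] at h
  have huu : IsUnit (A 1 2 - A 1 1) := by
    have h := unit2 ![0,1] ![1,2] (by decide) (by decide)
    simp only [Matrix.cons_val_zero, Matrix.cons_val_one, Matrix.head_cons] at h
    rw [h0k 1, h0k 2] at h
    rwa [show (1:R) * A 1 2 - 1 * A 1 1 = A 1 2 - A 1 1 from by ring] at h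
  have hvu : IsUnit (A 2 1 - A 1 1) := by
    have h := unit2 ![1,2] ![0,1] (by decide) (by decide)
    simp only [Matrix.cons_val_zero, Matrix.cons_val_one, Matrix.head_cons] at h
    rw [hk0 1, hk0 2] at h
    rwa [show (1:R) * A 2 1 - A 1 1 * 1 = A 2 1 - A 1 1 from by ring] at h
  have hwu : IsUnit (A 2 2 - A 1 2) := by
    have h := unit2 ![1,2] ![0,2] (by decide) (by decide)
    simp only [Matrix.cons_val_zero, Matrix.cons_val_one, Matrix.head_cons] at h
    rw [hk0 1, hk0 2] at h
    rwa [show (1:R) * A 2 2 - A 1 2 * 1 = A 2 2 - A 1 2 from by ring] at h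
  have htu : IsUnit (A 2 2 - A 2 1) := by
    have h := unit2 ![0,2] ![1,2] (by decide) (by decide)
    simp only [Matrix.cons_val_zero, Matrix.cons_val_one, Matrix.head_cons] at h
    rw [h0k 1, h0k 2] at h
    rwa [show (1:R) * A 2 2 - 1 * A 2 1 = A 2 2 - A 2 1 from by ring] at h
  have hmu : IsUnit (A 1 1*A 2 2 - A 1 2*A 2 1) := by
    have h := unit2 ![1,2] ![1,2] (by decide) (by decide)
    simpa only [Matrix.cons_val_zero, Matrix.cons_val_one, Matrix.head_cons] using h
  have hDu : IsUnit (A 1 1*A 2 2 - A 1 2*A 2 1 - A 1 1 - A 2 2 + A 1 2 + A 2 1) := by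
    have h := hsub 3 id id Function.injective_id Function.injective_id
    rw [Matrix.submatrix_id_id, Matrix.isUnit_iff_isUnit_det, Matrix.det_fin_three] at h
    rw [h0k 0, h0k 1, h0k 2, hk0 1, hk0 2] at h
    rwa [show (1:R) * A 1 1 * A 2 2 - 1 * A 1 2 * A 2 1 - 1 * 1 * A 2 2 + 1 * A 1 2 * 1
        + 1 * 1 * A 2 1 - 1 * A 1 1 * 1
        = A 1 1*A 2 2 - A 1 2*A 2 1 - A 1 1 - A 2 2 + A 1 2 + A 2 1 from by ring] at h
  obtain ⟨ia, hia⟩ := (unit1 1 1).exists_right_inv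
  obtain ⟨ib, hib⟩ := (unit1 1 2).exists_right_inv
  obtain ⟨ic, hic⟩ := (unit1 2 1).exists_right_inv
  obtain ⟨id', hid⟩ := (unit1 2 2).exists_right_inv
  have hJ2A : J2 A = !![1,1,1;1,ia,ic;1,ib,id'] := by
    ext i j
    fin_cases i <;> fin_cases j
    · show Ring.inverse (A 0 0) = 1
      rw [h0k 0]; exact rinv_eq (one_mul 1)
    · show Ring.inverse (A 1 0) = 1
      rw [hk0 1]; exact rinv_eq (one_mul 1)
    · show Ring.inverse (A 2 0) = 1
      rw [hk0 2]; exact rinv_eq (one_mul 1)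
    · show Ring.inverse (A 0 1) = 1
      rw [h0k 1]; exact rinv_eq (one_mul 1)
    · show Ring.inverse (A 1 1) = ia
      exact rinv_eq hia
    · show Ring.inverse (A 2 1) = ic
      exact rinv_eq hic
    · show Ring.inverse (A 0 2) = 1
      rw [h0k 2]; exact rinv_eq (one_mul 1)
    · show Ring.inverse (A 1 2) = ib
      exact rinv_eq hib
    · show Ring.inverse (A 2 2) = id'
      exact rinv_eq hid
  have hgu : IsUnit (ia*id' - ic*ib - id' + ic + ib - ia) := by
    have h := (Matrix.isUnit_iff_isUnit_det _).mp hJ2u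
    have hd3 : (!![1,1,1;1,ia,ic;1,ib,id'] : Matrix (Fin 3) (Fin 3) R).det
        = ia*id' - ic*ib - id' + ic + ib - ia := by
      rw [Matrix.det_fin_three]
      show (1 * ia * id' - 1 * ic * ib - 1 * 1 * id' + 1 * ic * 1 + 1 * 1 * ib - 1 * ia * 1 : R) = _
      ring
    rwa [hJ2A, hd3] at h
  obtain ⟨ig, hig⟩ := hgu.exists_right_inv
  have hEu : IsUnit (A 1 2*A 2 1 - A 1 1*A 2 2 + A 1 1*A 1 2*A 2 2 + A 1 1*A 2 1*A 2 2
      - A 1 1*A 1 2*A 2 1 - A 1 2*A 2 1*A 2 2) :=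
    IsUnit.of_mul_eq_one (ia*(ib*(ic*(id'*ig)))) (by linear_combination (-id'*ic*ib*ig*A 1 2*A 2 1 + id'*ic*ib*ig*A 1 2*A 2 2 + id'*ic*ib*ig*A 2 1*A 2 2 - id'*ic*ib*ig*A 2 2) * hia + (-id'*ic*ia*ig*A 2 1*A 2 2 + id'*ic*ia*ig*A 2 1 - id'*ic*ig*A 2 1 + id'*ic*ig*A 2 2) * hib + (id'*ib*ig*A 2 2 - id'*ia*ig*A 2 2 + id'*ia*ig - id'*ig) * hic + (-ic*ib*ig + ic*ig + ib*ig - ia*ig) * hid + (1) * hig)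
  obtain ⟨ip, hip⟩ := hpu.exists_right_inv
  obtain ⟨iq, hiq⟩ := hqu.exists_right_inv
  obtain ⟨ir, hir⟩ := hru.exists_right_inv
  obtain ⟨is', his⟩ := hsu.exists_right_inv
  obtain ⟨iu, hiu⟩ := huu.exists_right_inv
  obtain ⟨iv, hiv⟩ := hvu.exists_right_inv
  obtain ⟨iw, hiw⟩ := hwu.exists_right_inv
  obtain ⟨it', hit⟩ := htu.exists_right_inv
  obtain ⟨im', him⟩ := hmu.exists_right_inv
  obtain ⟨iD, hiD⟩ := hDu.exists_right_inv
  obtain ⟨iE, hiE⟩ := hEu.exists_right_inv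
  have hAe : A = !![1,1,1;1,A 1 1,A 1 2;1,A 2 1,A 2 2] := by
    ext i j
    fin_cases i <;> fin_cases j
    · exact h0k 0
    · exact h0k 1
    · exact h0k 2
    · exact hk0 1
    · rfl
    · rfl
    · exact hk0 2
    · rfl
    · rfl
  rw [hAe]
  exact auxKont (A 1 1) (A 1 2) (A 2 1) (A 2 2) (A 1 1 - 1) (A 1 2 - 1) (A 2 1 - 1) (A 2 2 - 1)
    (A 1 2 - A 1 1) (A 2 1 - A 1 1) (A 2 2 - A 1 2) (A 2 2 - A 2 1)
    (A 1 1*A 2 2 - A 1 2*A 2 1) (A 1 1*A 2 2 - A 1 2*A 2 1 - A 1 1 - A 2 2 + A 1 2 + A 2 1)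
    (A 1 2*A 2 1 - A 1 1*A 2 2 + A 1 1*A 1 2*A 2 2 + A 1 1*A 2 1*A 2 2
      - A 1 1*A 1 2*A 2 1 - A 1 2*A 2 1*A 2 2)
    ia ib ic id' ip iq ir is' iu iv iw it' im' iD iE
    rfl rfl rfl rfl rfl rfl rfl rfl rfl rfl rfl
    hia hib hic hid hip hiq hir his hiu hiv hiw hit him hiD hiE
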